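/- arXiv:1711.04839 — 5 statements merged into one kernel-verified Lean document; each statement's English description precedes it below -/
import Mathlib

section
/- If (x_v*, λ_v*) minimizes F over the feasible set of the distributed problem, then there exists (x*, λ*) ∈ ℝ^d × ℝ_{≥0} minimizing J over ℝ^d × ℝ_{≥0} such that x_v* = 𝟙ₙ ⊗ x* and λ_v* = λ*𝟙ₙ. -/
open scoped BigOperators RealInnerProductSpace
open Finset

noncomputable section

/-- `d`-dimensional Euclidean space. -/
abbrev Vec (d : ℕ) := EuclideanSpace ℝ (Fin d)

/-- g_k(x, λ, ξ) := f(x, ξ) − λ‖ξ − ξ̂ᵏ‖². -/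
def gk {d m N : ℕ} (f : Vec d → Vec m → ℝ) (ξhat : Fin N → Vec m) (k : Fin N)
    (x : Vec d) (lam : ℝ) (ξ : Vec m) : ℝ :=
  f x ξ - lam * ‖ξ - ξhat k‖ ^ 2

/-- Centralized objective J(x, λ) := λε² + (1/N) Σ_k sup_ξ g_k(x, λ, ξ), in extended reals. -/
def Jobj {d m N : ℕ} (ε : ℝ) (f : Vec d → Vec m → ℝ) (ξhat : Fin N → Vec m)
    (x : Vec d) (lam : ℝ) : EReal :=
  ((lam * ε ^ 2 : ℝ) : EReal)
    + ((1 / (N : ℝ) : ℝ) : EReal) *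
        ∑ k : Fin N, ⨆ ξ : Vec m, ((gk f ξhat k x lam ξ : ℝ) : EReal)

/-- Distributed objective F(x_v, λ_v), in extended reals. -/
def Fobj {d m n N : ℕ} (ε : ℝ) (f : Vec d → Vec m → ℝ) (ξhat : Fin N → Vec m)
    (v : Fin N → Fin n) (xv : Fin n → Vec d) (lv : Fin n → ℝ) : EReal :=
  ((ε ^ 2 / (n : ℝ) * ∑ i, lv i : ℝ) : EReal)
    + ((1 / (N : ℝ) : ℝ) : EReal) *
        ∑ k : Fin N, ⨆ ξ : Vec m, ((gk f ξhat k (xv (v k)) (lv (v k)) ξ : ℝ) : EReal)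

/-- Feasible set of the distributed problem: λ_v ≥ 0, 𝖫λ_v = 0, (𝖫 ⊗ I_d)x_v = 0. -/
def Feas {d n : ℕ} (Lap : Matrix (Fin n) (Fin n) ℝ) :
    Set ((Fin n → Vec d) × (Fin n → ℝ)) :=
  {p | (∀ i, 0 ≤ p.2 i) ∧ Lap.mulVec p.2 = 0 ∧ ∀ i : Fin n, ∑ j : Fin n, Lap i j • p.1 j = 0}

/-- Lagrangian L(x_v, λ_v, ν, η) := F(x_v, λ_v) + νᵀ𝖫λ_v + ηᵀ(𝖫 ⊗ I_d)x_v. -/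
def Lagr {d m n N : ℕ} (ε : ℝ) (f : Vec d → Vec m → ℝ) (ξhat : Fin N → Vec m)
    (v : Fin N → Fin n) (Lap : Matrix (Fin n) (Fin n) ℝ)
    (xv : Fin n → Vec d) (lv : Fin n → ℝ) (ν : Fin n → ℝ) (η : Fin n → Vec d) : EReal :=
  Fobj ε f ξhat v xv lv
    + ((∑ i, ν i * Lap.mulVec lv i
        + ∑ i, (inner ℝ (η i) (∑ j : Fin n, Lap i j • xv j) : ℝ) : ℝ) : EReal)

/-- Augmented Lagrangian L_aug := L + (1/2)x_vᵀ(𝖫 ⊗ I_d)x_v + (1/2)λ_vᵀ𝖫λ_v. -/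
def LagrAug {d m n N : ℕ} (ε : ℝ) (f : Vec d → Vec m → ℝ) (ξhat : Fin N → Vec m)
    (v : Fin N → Fin n) (Lap : Matrix (Fin n) (Fin n) ℝ)
    (xv : Fin n → Vec d) (lv : Fin n → ℝ) (ν : Fin n → ℝ) (η : Fin n → Vec d) : EReal :=
  Lagr ε f ξhat v Lap xv lv ν η
    + (((1 / 2 : ℝ) * ∑ i, (inner ℝ (xv i) (∑ j : Fin n, Lap i j • xv j) : ℝ)
        + (1 / 2 : ℝ) * ∑ i, lv i * Lap.mulVec lv i : ℝ) : EReal)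

/-- L̃_aug(x_v, λ_v, ν, η, {ξ^k}), real-valued. -/
def Ltld {d m n N : ℕ} (ε : ℝ) (f : Vec d → Vec m → ℝ) (ξhat : Fin N → Vec m)
    (v : Fin N → Fin n) (Lap : Matrix (Fin n) (Fin n) ℝ)
    (xv : Fin n → Vec d) (lv : Fin n → ℝ) (ν : Fin n → ℝ) (η : Fin n → Vec d)
    (ξs : Fin N → Vec m) : ℝ :=
  ε ^ 2 / (n : ℝ) * ∑ i, lv i
    + (1 / (N : ℝ)) * ∑ k : Fin N, gk f ξhat k (xv (v k)) (lv (v k)) (ξs k)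
    + ∑ i, ν i * Lap.mulVec lv i
    + ∑ i, (inner ℝ (η i) (∑ j : Fin n, Lap i j • xv j) : ℝ)
    + (1 / 2 : ℝ) * ∑ i, (inner ℝ (xv i) (∑ j : Fin n, Lap i j • xv j) : ℝ)
    + (1 / 2 : ℝ) * ∑ i, lv i * Lap.mulVec lv i

lemma consensus_Fobj_eq_Jobj {d m n N : ℕ} (hn : 0 < n)
    (ε : ℝ) (f : Vec d → Vec m → ℝ) (ξhat : Fin N → Vec m) (v : Fin N → Fin n)
    (x : Vec d) (lam : ℝ) :
    Fobj ε f ξhat v (fun _ => x) (fun _ => lam) = Jobj ε f ξhat x lam := by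
  unfold Fobj Jobj
  congr 1
  have hn' : (n : ℝ) ≠ 0 := Nat.cast_ne_zero.mpr hn.ne'
  norm_cast
  simp [Finset.sum_const, Finset.card_univ, nsmul_eq_mul]
  field_simp

/-- If (x_v*, λ_v*) minimizes F over the feasible set of the distributed
problem, then there exists (x*, λ*) ∈ ℝ^d × ℝ_{≥0} minimizing J over ℝ^d × ℝ_{≥0} with
x_v* = 𝟙ₙ ⊗ x* and λ_v* = λ*𝟙ₙ. -/
theorem distributed_optimizer_gives_centralized_optimizer
    {d m n N : ℕ} (hn : 0 < n) (hN : 0 < N)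
    (f : Vec d → Vec m → ℝ) (ξhat : Fin N → Vec m) (ε : ℝ) (hε : 0 < ε)
    (v : Fin N → Fin n) (hv : Function.Surjective v)
    (Lap : Matrix (Fin n) (Fin n) ℝ) (hLsym : Lap.IsSymm) (hLpsd : Lap.PosSemidef)
    (hLker : ∀ w : Fin n → ℝ, Lap.mulVec w = 0 ↔ ∃ c : ℝ, w = fun _ => c)
    (xvstar : Fin n → Vec d) (lvstar : Fin n → ℝ)
    (hfeas : ((xvstar, lvstar) : (Fin n → Vec d) × (Fin n → ℝ)) ∈ Feas (d := d) Lap)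
    (hopt : ∀ p ∈ Feas (d := d) Lap,
      Fobj ε f ξhat v xvstar lvstar ≤ Fobj ε f ξhat v p.1 p.2) :
    ∃ (xstar : Vec d) (lstar : ℝ), 0 ≤ lstar ∧
      (∀ x : Vec d, ∀ lam : ℝ, 0 ≤ lam →
        Jobj ε f ξhat xstar lstar ≤ Jobj ε f ξhat x lam) ∧
      xvstar = (fun _ => xstar) ∧ lvstar = (fun _ => lstar) := by
  obtain ⟨hpos, hlker, hxker⟩ := hfeas
  have i0 : Fin n := ⟨0, hn⟩
  -- λ is constant
  obtain ⟨lstar, hlconst⟩ := (hLker lvstar).mp hlker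
  -- row sums of Lap vanish
  have hrow : ∀ i : Fin n, ∑ j, Lap i j = 0 := by
    intro i
    have h1 : Lap.mulVec (fun _ => (1:ℝ)) = 0 := (hLker _).mpr ⟨1, rfl⟩
    have := congrFun h1 i
    simpa [Matrix.mulVec, dotProduct] using this
  -- x is constant
  have hxconst : ∀ i : Fin n, xvstar i = xvstar i0 := by
    intro i
    ext t
    have hw : Lap.mulVec (fun j => xvstar j t) = 0 := by
      funext i'
      have h0 := congrArg (fun w : Vec d => w t) (hxker i')
      have h1 : (∑ j, Lap i' j • xvstar j) t = ∑ j, (Lap i' j • xvstar j) t :=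
        by simp
      rw [h1] at h0
      simpa [Matrix.mulVec, dotProduct, PiLp.smul_apply,
        smul_eq_mul] using h0
    obtain ⟨c, hc⟩ := (hLker _).mp hw
    have h1 := congrFun hc i
    have h2 := congrFun hc i0
    simp only at h1 h2
    rw [h1, h2]
  set xstar := xvstar i0 with hxstar
  have hxv : xvstar = (fun _ => xstar) := funext hxconst
  have hlv : lvstar = (fun _ => lstar) := hlconst
  have hlpos : 0 ≤ lstar := by have := hpos i0; rwa [hlconst] at this
  refine ⟨xstar, lstar, hlpos, ?_, hxv, hlv⟩
  intro x lam hlam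
  have hfeas' : ((fun _ => x, fun _ => lam) : (Fin n → Vec d) × (Fin n → ℝ)) ∈
      Feas (d := d) Lap := by
    refine ⟨fun _ => hlam, (hLker _).mpr ⟨lam, rfl⟩, fun i => ?_⟩
    rw [← Finset.sum_smul, hrow i, zero_smul]
  have := hopt _ hfeas'
  rw [hxv, hlv] at this
  calc Jobj ε f ξhat xstar lstar
      = Fobj ε f ξhat v (fun _ => xstar) (fun _ => lstar) :=
        (consensus_Fobj_eq_Jobj hn ε f ξhat v xstar lstar).symm
    _ ≤ Fobj ε f ξhat v (fun _ => x) (fun _ => lam) := this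
    _ = Jobj ε f ξhat x lam := consensus_Fobj_eq_Jobj hn ε f ξhat v x lam

end
end

section
/- The set of saddle points of L over (ℝ^{nd} × ℝ_{≥0}ⁿ) × (ℝⁿ × ℝ^{nd}) is nonempty, and inf over (x_v, λ_v) with λ_v ≥ 0 of sup over (ν, η) of L(x_v, λ_v, ν, η) equals sup over (ν, η) of inf over (x_v, λ_v) with λ_v ≥ 0 of L(x_v, λ_v, ν, η), with both sides taken in the extended reals. -/
open scoped BigOperators RealInnerProductSpace
open Finset

noncomputable section

/-- A saddle point of the Lagrangian L over (ℝ^{nd} × ℝ_{≥0}ⁿ) × (ℝⁿ × ℝ^{nd}). -/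
def IsSaddleLagr {d m n N : ℕ} (ε : ℝ) (f : Vec d → Vec m → ℝ) (ξhat : Fin N → Vec m)
    (v : Fin N → Fin n) (Lap : Matrix (Fin n) (Fin n) ℝ)
    (xv : Fin n → Vec d) (lv : Fin n → ℝ) (ν : Fin n → ℝ) (η : Fin n → Vec d) : Prop :=
  (∀ i, 0 ≤ lv i) ∧
  (∀ (ν' : Fin n → ℝ) (η' : Fin n → Vec d),
    Lagr ε f ξhat v Lap xv lv ν' η' ≤ Lagr ε f ξhat v Lap xv lv ν η) ∧
  (∀ (xv' : Fin n → Vec d) (lv' : Fin n → ℝ), (∀ i, 0 ≤ lv' i) →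
    Lagr ε f ξhat v Lap xv lv ν η ≤ Lagr ε f ξhat v Lap xv' lv' ν η)

namespace DROAux

variable {d m n N : ℕ}

/-- The inner supremum. -/
def supE (f : Vec d → Vec m → ℝ) (ξhat : Fin N → Vec m) (k : Fin N)
    (x : Vec d) (lam : ℝ) : EReal :=
  ⨆ ξ : Vec m, ((gk f ξhat k x lam ξ : ℝ) : EReal)

lemma coe_le_supE (f : Vec d → Vec m → ℝ) (ξhat : Fin N → Vec m) (k : Fin N)
    (x : Vec d) (lam : ℝ) (ξ : Vec m) :
    ((gk f ξhat k x lam ξ : ℝ) : EReal) ≤ supE f ξhat k x lam :=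
  le_iSup (fun ξ => ((gk f ξhat k x lam ξ : ℝ) : EReal)) ξ

lemma supE_ne_bot (f : Vec d → Vec m → ℝ) (ξhat : Fin N → Vec m) (k : Fin N)
    (x : Vec d) (lam : ℝ) : supE f ξhat k x lam ≠ ⊥ := by
  intro h
  have := coe_le_supE f ξhat k x lam (ξhat k)
  rw [h, le_bot_iff] at this
  exact EReal.coe_ne_bot _ this

lemma sum_ne_bot {α : Type*} (s : Finset α) (g : α → EReal) (h : ∀ k ∈ s, g k ≠ ⊥) :
    ∑ k ∈ s, g k ≠ ⊥ := by
  classical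
  have := Finset.sum_induction g (fun x => x ≠ ⊥)
    (fun a b ha hb hab => by rcases EReal.add_eq_bot_iff.1 hab with h1 | h1 <;> [exact ha h1; exact hb h1])
    (by simp) h
  exact this

lemma sum_eq_top {α : Type*} (s : Finset α) (g : α → EReal) (h : ∀ k ∈ s, g k ≠ ⊥)
    {k₀ : α} (hk₀ : k₀ ∈ s) (ht : g k₀ = ⊤) : ∑ k ∈ s, g k = ⊤ := by
  classical
  rw [← Finset.add_sum_erase s g hk₀, ht]
  exact EReal.top_add_of_ne_bot (sum_ne_bot _ _ fun k hk => h k (Finset.mem_of_mem_erase hk))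

lemma coeSum {α : Type*} (s : Finset α) (r : α → ℝ) :
    ∑ k ∈ s, ((r k : ℝ) : EReal) = ((∑ k ∈ s, r k : ℝ) : EReal) := by
  classical
  induction s using Finset.induction_on with
  | empty => simp
  | insert _ _ hx ih =>
    rw [Finset.sum_insert hx, Finset.sum_insert hx, ih, EReal.coe_add]

lemma sum_coe {α : Type*} (s : Finset α) (g : α → EReal) (r : α → ℝ)
    (h : ∀ k ∈ s, g k = (r k : EReal)) : ∑ k ∈ s, g k = ((∑ k ∈ s, r k : ℝ) : EReal) := by
  rw [Finset.sum_congr rfl h, coeSum]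

/-- Real-valued version of `Fobj`. -/
def FR (ε : ℝ) (f : Vec d → Vec m → ℝ) (ξhat : Fin N → Vec m) (v : Fin N → Fin n)
    (xv : Fin n → Vec d) (lv : Fin n → ℝ) : ℝ :=
  ε ^ 2 / (n : ℝ) * ∑ i, lv i
    + 1 / (N : ℝ) * ∑ k : Fin N, (supE f ξhat k (xv (v k)) (lv (v k))).toReal

lemma Fobj_def (ε : ℝ) (f : Vec d → Vec m → ℝ) (ξhat : Fin N → Vec m) (v : Fin N → Fin n)
    (xv : Fin n → Vec d) (lv : Fin n → ℝ) :
    Fobj ε f ξhat v xv lv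
      = ((ε ^ 2 / (n : ℝ) * ∑ i, lv i : ℝ) : EReal)
        + ((1 / (N : ℝ) : ℝ) : EReal) * ∑ k : Fin N, supE f ξhat k (xv (v k)) (lv (v k)) := rfl

lemma Fobj_eq_coe (hN : 0 < N) (ε : ℝ) (f : Vec d → Vec m → ℝ) (ξhat : Fin N → Vec m)
    (v : Fin N → Fin n) (xv : Fin n → Vec d) (lv : Fin n → ℝ)
    (h : ∀ k, supE f ξhat k (xv (v k)) (lv (v k)) ≠ ⊤) :
    Fobj ε f ξhat v xv lv = ((FR ε f ξhat v xv lv : ℝ) : EReal) := by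
  rw [Fobj_def, sum_coe Finset.univ _ (fun k => (supE f ξhat k (xv (v k)) (lv (v k))).toReal)
    (fun k _ => (EReal.coe_toReal (h k) (supE_ne_bot f ξhat k _ _)).symm)]
  rw [← EReal.coe_mul, ← EReal.coe_add]
  rfl

lemma Fobj_eq_top (hN : 0 < N) (ε : ℝ) (f : Vec d → Vec m → ℝ) (ξhat : Fin N → Vec m)
    (v : Fin N → Fin n) (xv : Fin n → Vec d) (lv : Fin n → ℝ)
    {k₀ : Fin N} (h : supE f ξhat k₀ (xv (v k₀)) (lv (v k₀)) = ⊤) :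
    Fobj ε f ξhat v xv lv = ⊤ := by
  rw [Fobj_def, sum_eq_top Finset.univ (fun k => supE f ξhat k (xv (v k)) (lv (v k)))
    (fun k _ => supE_ne_bot f ξhat k _ _) (Finset.mem_univ k₀) h]
  rw [EReal.coe_mul_top_of_pos (by positivity : (0:ℝ) < 1 / (N:ℝ))]
  norm_cast

lemma Fobj_ne_bot (hN : 0 < N) (ε : ℝ) (f : Vec d → Vec m → ℝ) (ξhat : Fin N → Vec m)
    (v : Fin N → Fin n) (xv : Fin n → Vec d) (lv : Fin n → ℝ) :
    Fobj ε f ξhat v xv lv ≠ ⊥ := by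
  by_cases h : ∀ k, supE f ξhat k (xv (v k)) (lv (v k)) ≠ ⊤
  · rw [Fobj_eq_coe hN ε f ξhat v xv lv h]; exact EReal.coe_ne_bot _
  · push_neg at h
    obtain ⟨k₀, hk₀⟩ := h
    rw [Fobj_eq_top hN ε f ξhat v xv lv hk₀]; simp

lemma Fobj_ne_top_imp (hN : 0 < N) (ε : ℝ) (f : Vec d → Vec m → ℝ) (ξhat : Fin N → Vec m)
    (v : Fin N → Fin n) (xv : Fin n → Vec d) (lv : Fin n → ℝ)
    (h : Fobj ε f ξhat v xv lv ≠ ⊤) :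
    ∀ k, supE f ξhat k (xv (v k)) (lv (v k)) ≠ ⊤ := by
  intro k hk
  exact h (Fobj_eq_top hN ε f ξhat v xv lv hk)

lemma Fobj_consensus (hn : 0 < n) (ε : ℝ) (f : Vec d → Vec m → ℝ) (ξhat : Fin N → Vec m)
    (v : Fin N → Fin n) (x : Vec d) (lam : ℝ) :
    Fobj ε f ξhat v (fun _ => x) (fun _ => lam) = Jobj ε f ξhat x lam := by
  unfold Fobj Jobj
  congr 2
  rw [Finset.sum_const, Finset.card_univ, Fintype.card_fin]
  have hn' : (n:ℝ) ≠ 0 := Nat.cast_ne_zero.2 hn.ne'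
  field_simp
  ring

lemma gk_convex {f : Vec d → Vec m → ℝ} (hconv : ∀ ξ : Vec m, ConvexOn ℝ Set.univ (fun x => f x ξ))
    (ξhat : Fin N → Vec m) (k : Fin N) (ξ : Vec m) {x₁ x₂ : Vec d} {l₁ l₂ a b : ℝ}
    (ha : 0 ≤ a) (hb : 0 ≤ b) (hab : a + b = 1) :
    gk f ξhat k (a • x₁ + b • x₂) (a * l₁ + b * l₂) ξ
      ≤ a * gk f ξhat k x₁ l₁ ξ + b * gk f ξhat k x₂ l₂ ξ := by
  have h := (hconv ξ).2 (Set.mem_univ x₁) (Set.mem_univ x₂) ha hb hab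
  simp only [smul_eq_mul] at h
  unfold gk
  nlinarith [sq_nonneg (‖ξ - ξhat k‖)]

lemma supE_convex {f : Vec d → Vec m → ℝ}
    (hconv : ∀ ξ : Vec m, ConvexOn ℝ Set.univ (fun x => f x ξ))
    (ξhat : Fin N → Vec m) (k : Fin N) {x₁ x₂ : Vec d} {l₁ l₂ a b : ℝ}
    (ha : 0 ≤ a) (hb : 0 ≤ b) (hab : a + b = 1) {c₁ c₂ : ℝ}
    (h₁ : supE f ξhat k x₁ l₁ ≤ (c₁ : EReal)) (h₂ : supE f ξhat k x₂ l₂ ≤ (c₂ : EReal)) :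
    supE f ξhat k (a • x₁ + b • x₂) (a * l₁ + b * l₂) ≤ ((a * c₁ + b * c₂ : ℝ) : EReal) := by
  apply iSup_le
  intro ξ
  have hg1 : gk f ξhat k x₁ l₁ ξ ≤ c₁ := by
    exact_mod_cast (coe_le_supE f ξhat k x₁ l₁ ξ).trans h₁
  have hg2 : gk f ξhat k x₂ l₂ ξ ≤ c₂ := by
    exact_mod_cast (coe_le_supE f ξhat k x₂ l₂ ξ).trans h₂
  have := gk_convex hconv ξhat k ξ ha hb hab (x₁ := x₁) (x₂ := x₂) (l₁ := l₁) (l₂ := l₂)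
  have : gk f ξhat k (a • x₁ + b • x₂) (a * l₁ + b * l₂) ξ ≤ a * c₁ + b * c₂ := by
    nlinarith
  exact_mod_cast this

lemma Fobj_convexIneq (hn : 0 < n) (hN : 0 < N) (ε : ℝ) {f : Vec d → Vec m → ℝ}
    (hconv : ∀ ξ : Vec m, ConvexOn ℝ Set.univ (fun x => f x ξ))
    (ξhat : Fin N → Vec m) (v : Fin N → Fin n)
    {xv₁ xv₂ : Fin n → Vec d} {lv₁ lv₂ : Fin n → ℝ} {a b : ℝ}
    (ha : 0 ≤ a) (hb : 0 ≤ b) (hab : a + b = 1) {r₁ r₂ : ℝ}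
    (h₁ : Fobj ε f ξhat v xv₁ lv₁ = (r₁ : EReal)) (h₂ : Fobj ε f ξhat v xv₂ lv₂ = (r₂ : EReal)) :
    Fobj ε f ξhat v (fun i => a • xv₁ i + b • xv₂ i) (fun i => a * lv₁ i + b * lv₂ i)
      ≤ ((a * r₁ + b * r₂ : ℝ) : EReal) := by
  have hne₁ : ∀ k, supE f ξhat k (xv₁ (v k)) (lv₁ (v k)) ≠ ⊤ :=
    Fobj_ne_top_imp hN ε f ξhat v xv₁ lv₁ (by rw [h₁]; exact EReal.coe_ne_top _)
  have hne₂ : ∀ k, supE f ξhat k (xv₂ (v k)) (lv₂ (v k)) ≠ ⊤ :=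
    Fobj_ne_top_imp hN ε f ξhat v xv₂ lv₂ (by rw [h₂]; exact EReal.coe_ne_top _)
  set s₁ : Fin N → ℝ := fun k => (supE f ξhat k (xv₁ (v k)) (lv₁ (v k))).toReal with hs₁
  set s₂ : Fin N → ℝ := fun k => (supE f ξhat k (xv₂ (v k)) (lv₂ (v k))).toReal with hs₂
  have hrepr₁ : ∀ k, supE f ξhat k (xv₁ (v k)) (lv₁ (v k)) = ((s₁ k : ℝ) : EReal) :=
    fun k => (EReal.coe_toReal (hne₁ k) (supE_ne_bot f ξhat k _ _)).symm
  have hrepr₂ : ∀ k, supE f ξhat k (xv₂ (v k)) (lv₂ (v k)) = ((s₂ k : ℝ) : EReal) :=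
    fun k => (EReal.coe_toReal (hne₂ k) (supE_ne_bot f ξhat k _ _)).symm
  have hcombo : ∀ k, supE f ξhat k (a • xv₁ (v k) + b • xv₂ (v k)) (a * lv₁ (v k) + b * lv₂ (v k))
      ≤ ((a * s₁ k + b * s₂ k : ℝ) : EReal) := fun k =>
    supE_convex hconv ξhat k ha hb hab (le_of_eq (hrepr₁ k)) (le_of_eq (hrepr₂ k))
  have hcne : ∀ k, supE f ξhat k (a • xv₁ (v k) + b • xv₂ (v k)) (a * lv₁ (v k) + b * lv₂ (v k)) ≠ ⊤ :=
    fun k => ne_top_of_le_ne_top (EReal.coe_ne_top _) (hcombo k)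
  rw [Fobj_eq_coe hN ε f ξhat v _ _ hcne]
  rw [Fobj_eq_coe hN ε f ξhat v xv₁ lv₁ hne₁] at h₁
  rw [Fobj_eq_coe hN ε f ξhat v xv₂ lv₂ hne₂] at h₂
  have hr₁ : FR ε f ξhat v xv₁ lv₁ = r₁ := by exact_mod_cast h₁
  have hr₂ : FR ε f ξhat v xv₂ lv₂ = r₂ := by exact_mod_cast h₂
  rw [EReal.coe_le_coe_iff]
  unfold FR at hr₁ hr₂ ⊢
  have htoR : ∀ k : Fin N,
      (supE f ξhat k (a • xv₁ (v k) + b • xv₂ (v k)) (a * lv₁ (v k) + b * lv₂ (v k))).toReal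
        ≤ a * s₁ k + b * s₂ k := by
    intro k
    have h' := hcombo k
    have hb' := supE_ne_bot f ξhat k (a • xv₁ (v k) + b • xv₂ (v k)) (a * lv₁ (v k) + b * lv₂ (v k))
    rw [(EReal.coe_toReal (hcne k) hb').symm] at h'
    exact_mod_cast h'
  have hsum : ∑ k : Fin N,
      (supE f ξhat k (a • xv₁ (v k) + b • xv₂ (v k)) (a * lv₁ (v k) + b * lv₂ (v k))).toReal
      ≤ ∑ k : Fin N, (a * s₁ k + b * s₂ k) := Finset.sum_le_sum fun k _ => htoR k
  have hNpos : (0:ℝ) < 1 / (N:ℝ) := by positivity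
  calc ε ^ 2 / (n:ℝ) * ∑ i, (a * lv₁ i + b * lv₂ i)
        + 1 / (N:ℝ) * ∑ k : Fin N,
            (supE f ξhat k (a • xv₁ (v k) + b • xv₂ (v k)) (a * lv₁ (v k) + b * lv₂ (v k))).toReal
      ≤ ε ^ 2 / (n:ℝ) * ∑ i, (a * lv₁ i + b * lv₂ i)
        + 1 / (N:ℝ) * ∑ k : Fin N, (a * s₁ k + b * s₂ k) := by
        have := mul_le_mul_of_nonneg_left hsum hNpos.le
        linarith
    _ = a * r₁ + b * r₂ := by
        rw [← hr₁, ← hr₂]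
        rw [Finset.sum_add_distrib, Finset.sum_add_distrib, ← Finset.mul_sum, ← Finset.mul_sum,
          ← Finset.mul_sum, ← Finset.mul_sum]
        have hnn : (0:ℝ) ≤ ε ^ 2 / (n:ℝ) := by positivity
        ring

lemma rowsum_zero {Lap : Matrix (Fin n) (Fin n) ℝ}
    (hLker : ∀ w : Fin n → ℝ, Lap.mulVec w = 0 ↔ ∃ c : ℝ, w = fun _ => c) (i : Fin n) :
    ∑ j, Lap i j = 0 := by
  have h1 : Lap.mulVec (fun _ => (1:ℝ)) = 0 := (hLker _).2 ⟨1, rfl⟩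
  have := congrFun h1 i
  simpa [Matrix.mulVec, dotProduct] using this

lemma mulVec_const {Lap : Matrix (Fin n) (Fin n) ℝ}
    (hLker : ∀ w : Fin n → ℝ, Lap.mulVec w = 0 ↔ ∃ c : ℝ, w = fun _ => c) (c : ℝ) :
    Lap.mulVec (fun _ => c) = 0 := (hLker _).2 ⟨c, rfl⟩

lemma smulsum_consensus {Lap : Matrix (Fin n) (Fin n) ℝ}
    (hLker : ∀ w : Fin n → ℝ, Lap.mulVec w = 0 ↔ ∃ c : ℝ, w = fun _ => c)
    (x : Vec d) (i : Fin n) : ∑ j, Lap i j • x = 0 := by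
  rw [← Finset.sum_smul, rowsum_zero hLker i, zero_smul]

/-- Surjectivity of the Laplacian onto the mean-zero subspace. -/
lemma lap_solve (hn : 0 < n) {Lap : Matrix (Fin n) (Fin n) ℝ} (hLsym : Lap.IsSymm)
    (hLker : ∀ w : Fin n → ℝ, Lap.mulVec w = 0 ↔ ∃ c : ℝ, w = fun _ => c)
    (t : Fin n → ℝ) (ht : ∑ i, t i = 0) : ∃ νs : Fin n → ℝ, Lap.mulVec νs = t := by
  classical
  set Lmap : (Fin n → ℝ) →ₗ[ℝ] (Fin n → ℝ) := Matrix.mulVecLin Lap with hLmap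
  set sumF : (Fin n → ℝ) →ₗ[ℝ] ℝ := ∑ i, LinearMap.proj i with hsumF
  have hsumF_apply : ∀ w : Fin n → ℝ, sumF w = ∑ i, w i := by
    intro w; simp [hsumF]
  -- kernel of Lmap is the span of the constant vector
  have hker : LinearMap.ker Lmap = Submodule.span ℝ {(fun _ => (1:ℝ))} := by
    ext w
    rw [LinearMap.mem_ker, Submodule.mem_span_singleton]
    constructor
    · intro hw
      obtain ⟨c, hc⟩ := (hLker w).1 hw
      exact ⟨c, by funext i; simp [hc]⟩
    · rintro ⟨c, rfl⟩
      exact (hLker _).2 ⟨c, by funext i; simp⟩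
  have hone_ne : (fun _ => (1:ℝ)) ≠ (0 : Fin n → ℝ) := by
    intro h
    have := congrFun h ⟨0, hn⟩
    norm_num at this
  have hkerdim : Module.finrank ℝ (LinearMap.ker Lmap) = 1 := by
    rw [hker, finrank_span_singleton hone_ne]
  have hRN := LinearMap.finrank_range_add_finrank_ker Lmap
  rw [hkerdim] at hRN
  have hdim : Module.finrank ℝ (Fin n → ℝ) = n := by simp
  rw [hdim] at hRN
  -- sumF is surjective
  have hsurj : Function.Surjective sumF := by
    intro c
    refine ⟨Pi.single ⟨0, hn⟩ c, ?_⟩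
    rw [hsumF_apply]
    simp [Pi.single_apply]
  have hRNs := LinearMap.finrank_range_add_finrank_ker sumF
  rw [LinearMap.range_eq_top.2 hsurj] at hRNs
  have : Module.finrank ℝ (⊤ : Submodule ℝ ℝ) = 1 := by simp
  rw [this, hdim] at hRNs
  -- range of Lmap is contained in the kernel of sumF
  have hle : LinearMap.range Lmap ≤ LinearMap.ker sumF := by
    rintro w ⟨y, rfl⟩
    rw [LinearMap.mem_ker, hsumF_apply]
    have : ∀ i, Lmap y i = ∑ j, Lap i j * y j := by
      intro i; simp [hLmap, Matrix.mulVecLin, Matrix.mulVec, dotProduct]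
    rw [Finset.sum_congr rfl fun i _ => this i, Finset.sum_comm]
    have hcol : ∀ j, ∑ i, Lap i j = 0 := by
      intro j
      have := rowsum_zero hLker j
      rw [← this]
      exact Finset.sum_congr rfl fun i _ => by rw [← hLsym.apply i j]
    rw [Finset.sum_congr rfl fun j _ => by rw [← Finset.sum_mul, hcol j, zero_mul]]
    simp
  have heq : LinearMap.range Lmap = LinearMap.ker sumF := by
    apply Submodule.eq_of_le_of_finrank_le hle
    omega
  have htmem : t ∈ LinearMap.ker sumF := by rw [LinearMap.mem_ker, hsumF_apply]; exact ht
  rw [← heq] at htmem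
  obtain ⟨νs, hνs⟩ := htmem
  exact ⟨νs, hνs⟩

/-- The Lagrange-multiplier coupling term. -/
def mterm (Lap : Matrix (Fin n) (Fin n) ℝ) (ν : Fin n → ℝ) (η : Fin n → Vec d)
    (xv : Fin n → Vec d) (lv : Fin n → ℝ) : ℝ :=
  ∑ i, ν i * Lap.mulVec lv i + ∑ i, (inner ℝ (η i) (∑ j : Fin n, Lap i j • xv j) : ℝ)

lemma sum_pi_single_const {M : Type*} [AddCommMonoid M] (y : M) :
    ∑ i : Fin n, Pi.single (M := fun _ : Fin n => M) i y = fun _ : Fin n => y := by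
  classical
  funext j
  rw [Finset.sum_apply]
  simp [Pi.single_apply]

lemma pi_decomp (w : Fin n → ℝ) :
    w = ∑ i, w i • Pi.single (M := fun _ : Fin n => ℝ) i (1:ℝ) := by
  classical
  funext j
  rw [Finset.sum_apply]
  simp [Pi.single_apply]

lemma vec_decomp (y : Vec d) : y = ∑ c, y c • EuclideanSpace.single c (1:ℝ) := by
  ext c'
  rw [WithLp.ofLp_sum, Finset.sum_apply]
  simp [EuclideanSpace.single_apply]

lemma pivec_decomp (xv : Fin n → Vec d) :
    xv = ∑ i, Pi.single (M := fun _ : Fin n => Vec d) i (xv i) := by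
  classical
  funext j
  rw [Finset.sum_apply]
  simp [Pi.single_apply]

lemma inner_sum_coords (a b : Vec d) : (inner ℝ a b : ℝ) = ∑ c, a c * b c := by
  simp [PiLp.inner_apply, RCLike.inner_apply, conj_trivial]
  exact Finset.sum_congr rfl fun _ _ => mul_comm _ _

lemma realize_mterm (hn : 0 < n) {Lap : Matrix (Fin n) (Fin n) ℝ} (hLsym : Lap.IsSymm)
    (hLker : ∀ w : Fin n → ℝ, Lap.mulVec w = 0 ↔ ∃ c : ℝ, w = fun _ => c)
    (ψ : ((Fin n → Vec d) × (Fin n → ℝ)) →ₗ[ℝ] ℝ)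
    (hψ : ∀ (x : Vec d) (c : ℝ), ψ (fun _ => x, fun _ => c) = 0) :
    ∃ (ν : Fin n → ℝ) (η : Fin n → Vec d), ∀ (xv : Fin n → Vec d) (lv : Fin n → ℝ),
      mterm Lap ν η xv lv = ψ (xv, lv) := by
  classical
  set ψ₂ : (Fin n → ℝ) →ₗ[ℝ] ℝ := ψ ∘ₗ LinearMap.inr ℝ (Fin n → Vec d) (Fin n → ℝ) with hψ₂
  set ψ₁ : (Fin n → Vec d) →ₗ[ℝ] ℝ := ψ ∘ₗ LinearMap.inl ℝ (Fin n → Vec d) (Fin n → ℝ) with hψ₁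
  set t : Fin n → ℝ := fun i => ψ₂ (Pi.single (M := fun _ : Fin n => ℝ) i 1) with hT
  have ht : ∑ i, t i = 0 := by
    rw [hT, ← map_sum, sum_pi_single_const (1:ℝ)]
    simpa [hψ₂, Pi.zero_def] using hψ 0 1
  obtain ⟨ν, hν⟩ := lap_solve hn hLsym hLker t ht
  set χ : Fin n → (Vec d →ₗ[ℝ] ℝ) :=
    fun i => ψ₁ ∘ₗ LinearMap.single ℝ (fun _ : Fin n => Vec d) i with hχ
  set u : Fin n → Fin d → ℝ := fun i c => χ i (EuclideanSpace.single c (1:ℝ)) with hU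
  have hu : ∀ c, ∑ i, u i c = 0 := by
    intro c
    have h1 : ∀ i, u i c = ψ₁ (Pi.single (M := fun _ : Fin n => Vec d) i
        (EuclideanSpace.single c (1:ℝ))) := fun i => rfl
    rw [Finset.sum_congr rfl fun i _ => h1 i, ← map_sum,
      sum_pi_single_const (EuclideanSpace.single c (1:ℝ))]
    simpa [hψ₁, Pi.zero_def] using hψ (EuclideanSpace.single c (1:ℝ)) 0
  have hμ : ∀ c : Fin d, ∃ νc : Fin n → ℝ, Lap.mulVec νc = fun i => u i c :=
    fun c => lap_solve hn hLsym hLker _ (hu c)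
  choose μ hμ' using hμ
  set η : Fin n → Vec d := fun i => (WithLp.equiv 2 (Fin d → ℝ)).symm (fun c => μ c i) with hη
  have hηapp : ∀ i c, η i c = μ c i := by intro i c; rw [hη]; rfl
  refine ⟨ν, η, fun xv lv => ?_⟩
  have part1 : ∑ i, ν i * Lap.mulVec lv i = ψ₂ lv := by
    have hdot : ∑ i, ν i * Lap.mulVec lv i = dotProduct ν (Lap.mulVec lv) := rfl
    rw [hdot, Matrix.dotProduct_mulVec, ← Matrix.mulVec_transpose, hLsym.eq, hν]
    have h2 : ψ₂ lv = ∑ i, lv i * t i := by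
      conv_lhs => rw [pi_decomp lv]
      rw [map_sum]
      exact Finset.sum_congr rfl fun i _ => by rw [map_smul, smul_eq_mul, hT]
    rw [h2]
    exact Finset.sum_congr rfl fun i _ => mul_comm _ _
  have part2 : ∑ i, (inner ℝ (η i) (∑ j : Fin n, Lap i j • xv j) : ℝ) = ψ₁ xv := by
    have hcoord : ∀ (i : Fin n) (c : Fin d), (∑ j, Lap i j • xv j) c = ∑ j, Lap i j * xv j c := by
      intro i c
      rw [WithLp.ofLp_sum, Finset.sum_apply]
      simp [PiLp.smul_apply]
    have lhs_eq : ∑ i, (inner ℝ (η i) (∑ j : Fin n, Lap i j • xv j) : ℝ)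
        = ∑ i, ∑ c, μ c i * ∑ j, Lap i j * xv j c := by
      refine Finset.sum_congr rfl fun i _ => ?_
      rw [inner_sum_coords]
      exact Finset.sum_congr rfl fun c _ => by rw [hcoord i c, hηapp i c]
    rw [lhs_eq, Finset.sum_comm]
    have hc : ∀ c : Fin d, ∑ i, μ c i * ∑ j, Lap i j * xv j c = ∑ i, u i c * xv i c := by
      intro c
      have h1 : ∑ i, μ c i * ∑ j, Lap i j * xv j c
          = dotProduct (μ c) (Lap.mulVec (fun j => xv j c)) := rfl
      rw [h1, Matrix.dotProduct_mulVec, ← Matrix.mulVec_transpose, hLsym.eq, hμ' c]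
      rfl
    rw [Finset.sum_congr rfl fun c _ => hc c, Finset.sum_comm]
    have rhs_eq : ψ₁ xv = ∑ i, ∑ c, xv i c * u i c := by
      conv_lhs => rw [pivec_decomp xv]
      rw [map_sum]
      refine Finset.sum_congr rfl fun i _ => ?_
      have h3 : ψ₁ (Pi.single (M := fun _ : Fin n => Vec d) i (xv i)) = χ i (xv i) := rfl
      rw [h3]
      conv_lhs => rw [vec_decomp (xv i)]
      rw [map_sum]
      exact Finset.sum_congr rfl fun c _ => by rw [map_smul, smul_eq_mul, hU]
    rw [rhs_eq]
    exact Finset.sum_congr rfl fun i _ => Finset.sum_congr rfl fun c _ => mul_comm _ _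
  rw [mterm, part1, part2]
  have hsplit : (xv, lv) = ((xv, 0) : _ × _) + ((0, lv) : _ × _) := by ext <;> simp
  rw [hsplit, map_add]
  have e1 : ψ (xv, (0 : Fin n → ℝ)) = ψ₁ xv := rfl
  have e2 : ψ ((0 : Fin n → Vec d), lv) = ψ₂ lv := rfl
  rw [e1, e2]
  ring

lemma Jobj_eq_Fobj (hn : 0 < n) (ε : ℝ) (f : Vec d → Vec m → ℝ) (ξhat : Fin N → Vec m)
    (v : Fin N → Fin n) (x : Vec d) (lam : ℝ) :
    Jobj ε f ξhat x lam = Fobj ε f ξhat v (fun _ => x) (fun _ => lam) :=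
  (Fobj_consensus hn ε f ξhat v x lam).symm

set_option maxHeartbeats 1000000 in
/-- Existence of Lagrange multipliers (strong duality inequality). -/
lemma key_multipliers (hn : 0 < n) (hN : 0 < N)
    (f : Vec d → Vec m → ℝ) (ξhat : Fin N → Vec m) (ε : ℝ)
    (hconv : ∀ ξ : Vec m, ConvexOn ℝ Set.univ (fun x => f x ξ))
    (v : Fin N → Fin n)
    {Lap : Matrix (Fin n) (Fin n) ℝ} (hLsym : Lap.IsSymm)
    (hLker : ∀ w : Fin n → ℝ, Lap.mulVec w = 0 ↔ ∃ c : ℝ, w = fun _ => c)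
    (hfin : (interior {p : Vec d × ℝ |
        0 ≤ p.2 ∧ ∃ r : ℝ, Jobj ε f ξhat p.1 p.2 = (r : EReal)}).Nonempty)
    {xs : Vec d} {ls : ℝ} (hls : 0 ≤ ls)
    (hmin : ∀ x : Vec d, ∀ lam : ℝ, 0 ≤ lam → Jobj ε f ξhat xs ls ≤ Jobj ε f ξhat x lam) :
    ∃ (ν : Fin n → ℝ) (η : Fin n → Vec d), ∀ (xv : Fin n → Vec d) (lv : Fin n → ℝ),
      (∀ i, 0 ≤ lv i) →
      Jobj ε f ξhat xs ls ≤ Fobj ε f ξhat v xv lv + ((mterm Lap ν η xv lv : ℝ) : EReal) := by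
  classical
  set S : Set (Vec d × ℝ) :=
    {p : Vec d × ℝ | 0 ≤ p.2 ∧ ∃ r : ℝ, Jobj ε f ξhat p.1 p.2 = (r : EReal)} with hS
  obtain ⟨p₀, hp₀⟩ := hfin
  obtain ⟨ρ₀, hρ₀pos, hball⟩ := Metric.isOpen_iff.1 isOpen_interior p₀ hp₀
  have hWsub : interior S ⊆ S := interior_subset
  -- positivity of the second coordinate of the Slater point
  have hl0pos : 0 < p₀.2 := by
    have hq : (p₀.1, p₀.2 - ρ₀/2) ∈ Metric.ball p₀ ρ₀ := by
      rw [Metric.mem_ball, Prod.dist_eq]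
      have h1 : dist p₀.1 p₀.1 = 0 := dist_self _
      have h2 : dist (p₀.2 - ρ₀/2) p₀.2 = ρ₀/2 := by
        rw [Real.dist_eq]
        rw [abs_of_nonpos (by linarith)]
        ring
      rw [h1, h2]
      simp only [max_lt_iff]
      constructor <;> linarith
    have h3 : 0 ≤ p₀.2 - ρ₀/2 := (hWsub (hball hq)).1
    linarith
  -- the value of the centralized problem
  obtain ⟨r₀J, hr₀J⟩ := (hWsub hp₀).2
  have hJbot : Jobj ε f ξhat xs ls ≠ ⊥ := by
    rw [Jobj_eq_Fobj hn ε f ξhat v]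
    exact Fobj_ne_bot hN ε f ξhat v _ _
  have hJtop : Jobj ε f ξhat xs ls ≠ ⊤ := by
    intro htop
    have := hmin p₀.1 p₀.2 (hWsub hp₀).1
    rw [htop, hr₀J, top_le_iff] at this
    exact EReal.coe_ne_top _ this
  obtain ⟨pR, hpR⟩ : ∃ pR : ℝ, Jobj ε f ξhat xs ls = (pR : EReal) :=
    ⟨(Jobj ε f ξhat xs ls).toReal, (EReal.coe_toReal hJtop hJbot).symm⟩
  -- the neighborhood O in the product space
  set Z := (Fin n → Vec d) × (Fin n → ℝ)
  set O : Set Z := {z : Z | ∀ i, (z.1 i, z.2 i) ∈ Metric.ball p₀ ρ₀} with hO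
  have hOopen : IsOpen O := by
    have : O = ⋂ i, ((fun z : Z => (z.1 i, z.2 i)) ⁻¹' Metric.ball p₀ ρ₀) := by
      ext z; simp [hO, Set.mem_iInter]
    rw [this]
    exact isOpen_iInter_of_finite fun i =>
      (((continuous_apply i).comp continuous_fst).prodMk
        ((continuous_apply i).comp continuous_snd)).isOpen_preimage _ Metric.isOpen_ball
  have hOconv : Convex ℝ O := by
    intro z₁ h₁ z₂ h₂ a b ha hb hab
    intro i
    have : ((a • z₁ + b • z₂).1 i, (a • z₁ + b • z₂).2 i)
        = a • (z₁.1 i, z₁.2 i) + b • (z₂.1 i, z₂.2 i) := rfl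
    rw [this]
    exact convex_ball p₀ ρ₀ (h₁ i) (h₂ i) ha hb hab
  have hOS : ∀ z ∈ O, ∀ i, (z.1 i, z.2 i) ∈ S := fun z hz i => hWsub (hball (hz i))
  have hOK : ∀ z ∈ O, ∀ i, 0 ≤ z.2 i := fun z hz i => (hOS z hz i).1
  have hsupO : ∀ z ∈ O, ∀ k, supE f ξhat k (z.1 (v k)) (z.2 (v k)) ≠ ⊤ := by
    intro z hz k
    obtain ⟨r, hr⟩ := (hOS z hz (v k)).2
    have hFne : Fobj ε f ξhat v (fun _ => z.1 (v k)) (fun _ => z.2 (v k)) ≠ ⊤ := by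
      rw [← Jobj_eq_Fobj hn ε f ξhat v, hr]; exact EReal.coe_ne_top _
    exact Fobj_ne_top_imp hN ε f ξhat v _ _ hFne k
  have hFoO : ∀ z ∈ O, Fobj ε f ξhat v z.1 z.2 = ((FR ε f ξhat v z.1 z.2 : ℝ) : EReal) :=
    fun z hz => Fobj_eq_coe hN ε f ξhat v z.1 z.2 (hsupO z hz)
  -- convexity of the real-valued objective on O
  set FRz : Z → ℝ := fun z => FR ε f ξhat v z.1 z.2 with hFRz
  have hFRconv : ConvexOn ℝ O FRz := by
    refine ⟨hOconv, fun z₁ h₁ z₂ h₂ a b ha hb hab => ?_⟩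
    have hcombo := Fobj_convexIneq hn hN ε hconv ξhat v ha hb hab
      (hFoO z₁ h₁) (hFoO z₂ h₂)
    have hmem := hOconv h₁ h₂ ha hb hab
    have heq := hFoO _ hmem
    have hshape : Fobj ε f ξhat v (a • z₁ + b • z₂).1 (a • z₁ + b • z₂).2
        = Fobj ε f ξhat v (fun i => a • z₁.1 i + b • z₂.1 i) (fun i => a * z₁.2 i + b * z₂.2 i) :=
      rfl
    rw [hshape] at heq
    rw [heq] at hcombo
    simp only [smul_eq_mul]
    exact_mod_cast hcombo
  -- Slater point in the product space
  set z₀ : Z := ((fun _ => p₀.1), fun _ => p₀.2) with hz₀def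
  have hz₀O : z₀ ∈ O := by
    intro i
    have : ((z₀.1 i), (z₀.2 i)) = p₀ := rfl
    rw [this]
    exact Metric.mem_ball_self hρ₀pos
  have hcontFR : ContinuousOn FRz O := hFRconv.continuousOn hOopen
  set M : ℝ := FRz z₀ + 1 with hM
  have hev : ∀ᶠ z in nhds z₀, FRz z < M :=
    Filter.Tendsto.eventually_lt_const (lt_add_one _)
      (hcontFR.continuousAt (hOopen.mem_nhds hz₀O))
  obtain ⟨ρ', hρ'pos, hball'⟩ := Metric.mem_nhds_iff.1
    (Filter.inter_mem (hOopen.mem_nhds hz₀O) hev)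
  -- the strict epigraph set and the consensus set
  set E : Set (Z × ℝ) := {p : Z × ℝ |
    (∀ i, 0 ≤ p.1.2 i) ∧ Fobj ε f ξhat v p.1.1 p.1.2 < ((p.2 : ℝ) : EReal)} with hE
  set T : Set (Z × ℝ) := {p : Z × ℝ |
    (∃ (x : Vec d) (c : ℝ), p.1 = ((fun _ => x), fun _ => c)) ∧ p.2 ≤ pR} with hT
  have hEconv : Convex ℝ E := by
    rintro p hp q hq a b ha hb hab
    rcases eq_or_lt_of_le ha with rfl | ha'
    · have hb1 : b = 1 := by linarith
      subst hb1
      simpa using hq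
    rcases eq_or_lt_of_le hb with rfl | hb'
    · have ha1 : a = 1 := by linarith
      subst ha1
      simpa using hp
    constructor
    · intro i
      have : (a • p + b • q).1.2 i = a * p.1.2 i + b * q.1.2 i := rfl
      rw [this]
      have := hp.1 i; have := hq.1 i
      positivity
    · have hpne : Fobj ε f ξhat v p.1.1 p.1.2 ≠ ⊤ := ne_top_of_lt hp.2
      have hqne : Fobj ε f ξhat v q.1.1 q.1.2 ≠ ⊤ := ne_top_of_lt hq.2
      obtain ⟨r₁, hr₁⟩ : ∃ r : ℝ, Fobj ε f ξhat v p.1.1 p.1.2 = (r : EReal) :=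
        ⟨_, (EReal.coe_toReal hpne (Fobj_ne_bot hN ε f ξhat v _ _)).symm⟩
      obtain ⟨r₂, hr₂⟩ : ∃ r : ℝ, Fobj ε f ξhat v q.1.1 q.1.2 = (r : EReal) :=
        ⟨_, (EReal.coe_toReal hqne (Fobj_ne_bot hN ε f ξhat v _ _)).symm⟩
      have hlt₁ : r₁ < p.2 := by
        have := hp.2; rw [hr₁] at this; exact_mod_cast this
      have hlt₂ : r₂ < q.2 := by
        have := hq.2; rw [hr₂] at this; exact_mod_cast this
      have hcombo := Fobj_convexIneq hn hN ε hconv ξhat v ha hb hab hr₁ hr₂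
      have hshape : Fobj ε f ξhat v (a • p + b • q).1.1 (a • p + b • q).1.2
          = Fobj ε f ξhat v (fun i => a • p.1.1 i + b • q.1.1 i)
              (fun i => a * p.1.2 i + b * q.1.2 i) := rfl
      rw [hshape]
      refine lt_of_le_of_lt hcombo ?_
      have : (a • p + b • q).2 = a * p.2 + b * q.2 := rfl
      rw [this]
      have : a * r₁ + b * r₂ < a * p.2 + b * q.2 := by nlinarith
      exact_mod_cast this
  have hTconv : Convex ℝ T := by
    rintro p ⟨⟨x₁, c₁, hp1⟩, hp2⟩ q ⟨⟨x₂, c₂, hq1⟩, hq2⟩ a b ha hb hab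
    constructor
    · refine ⟨a • x₁ + b • x₂, a * c₁ + b * c₂, ?_⟩
      have : (a • p + b • q).1 = a • p.1 + b • q.1 := rfl
      rw [this, hp1, hq1]
      rfl
    · have : (a • p + b • q).2 = a * p.2 + b * q.2 := rfl
      rw [this]
      have habp : a * pR + b * pR = pR := by rw [← add_mul, hab, one_mul]
      nlinarith [mul_le_mul_of_nonneg_left hp2 ha, mul_le_mul_of_nonneg_left hq2 hb]
  have hdisj : Disjoint (interior E) T := by
    rw [Set.disjoint_left]
    rintro p hpE ⟨⟨x, c, hcons⟩, hle⟩
    have hpE' := interior_subset hpE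
    obtain ⟨hKp, hltp⟩ := hpE'
    have hc0 : 0 ≤ c := by
      have := hKp ⟨0, hn⟩
      rw [hcons] at this
      exact this
    have hFc : Fobj ε f ξhat v p.1.1 p.1.2 = Jobj ε f ξhat x c := by
      rw [hcons]
      exact Fobj_consensus hn ε f ξhat v x c
    have h1 : ((pR : ℝ) : EReal) ≤ Fobj ε f ξhat v p.1.1 p.1.2 := by
      rw [hFc, ← hpR]
      exact hmin x c hc0
    have h2 : Fobj ε f ξhat v p.1.1 p.1.2 < ((pR : ℝ) : EReal) :=
      lt_of_lt_of_le hltp (by exact_mod_cast hle)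
    exact absurd (lt_of_le_of_lt h1 h2) (lt_irrefl _)
  obtain ⟨f₀, u, hsep₁, hsep₂⟩ :=
    geometric_hahn_banach_open hEconv.interior isOpen_interior hTconv hdisj
  -- decompose the separating functional
  set φ : Z → ℝ := fun z => f₀ (z, (0:ℝ)) with hφ
  set β : ℝ := f₀ ((0 : Z), (1:ℝ)) with hβ
  have hdecomp : ∀ (z : Z) (r : ℝ), f₀ (z, r) = φ z + r * β := by
    intro z r
    have h1 : (z, r) = ((z, (0:ℝ)) : Z × ℝ) + (((0:Z), r) : Z × ℝ) := by ext <;> simp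
    have h2 : (((0:Z), r) : Z × ℝ) = r • (((0:Z), (1:ℝ)) : Z × ℝ) := by ext <;> simp
    rw [h1, map_add, h2, map_smul, smul_eq_mul]
  have hφsmul : ∀ (s : ℝ) (z : Z), φ (s • z) = s * φ z := by
    intro s z
    have h1 : ((s • z, (0:ℝ)) : Z × ℝ) = s • ((z, (0:ℝ)) : Z × ℝ) := by ext <;> simp
    rw [hφ]
    show f₀ (s • z, (0:ℝ)) = s * f₀ (z, 0)
    rw [h1, map_smul, smul_eq_mul]
  -- consensus points
  have hTmem : ∀ (x : Vec d) (c : ℝ) (r : ℝ), r ≤ pR →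
      ((((fun _ => x), fun _ => c) : Z), r) ∈ T := fun x c r hr => ⟨⟨x, c, rfl⟩, hr⟩
  have hconsen : ∀ (x : Vec d) (c : ℝ) (s : ℝ),
      s • (((fun _ => x), fun _ => c) : Z) = (((fun _ => s • x), fun _ => s * c) : Z) := by
    intro x c s; rfl
  have hφcons : ∀ (x : Vec d) (c : ℝ), φ (((fun _ => x), fun _ => c) : Z) = 0 := by
    intro x c
    by_contra hne
    set z : Z := (((fun _ => x), fun _ => c) : Z) with hzdef
    have hlow : ∀ s : ℝ, u - pR * β ≤ s * φ z := by
      intro s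
      have hT' := hsep₂ _ (hTmem (s • x) (s * c) pR le_rfl)
      rw [hdecomp] at hT'
      have : φ (((fun _ => s • x), fun _ => s * c) : Z) = s * φ z := by
        rw [← hconsen, hφsmul]
      rw [this] at hT'
      linarith
    have := hlow ((u - pR * β - 1) / φ z)
    rw [div_mul_cancel₀ _ hne] at this
    linarith
  -- interior point of E
  have hz₀E : ((z₀, M + 1) : Z × ℝ) ∈ interior E := by
    rw [mem_interior]
    refine ⟨Metric.ball z₀ ρ' ×ˢ Set.Ioi M, ?_, Metric.isOpen_ball.prod isOpen_Ioi, ?_⟩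
    · rintro ⟨z, r⟩ ⟨hz, hr⟩
      have hzO : z ∈ O ∩ {z | FRz z < M} := hball' hz
      refine ⟨hOK z hzO.1, ?_⟩
      rw [hFoO z hzO.1]
      have : FRz z < r := lt_trans hzO.2 hr
      exact_mod_cast this
    · exact ⟨Metric.mem_ball_self hρ'pos, Set.mem_Ioi.2 (lt_add_one M)⟩
  -- sign of β
  have hβle : β ≤ 0 := by
    by_contra hpos
    push_neg at hpos
    have h1 := hsep₂ _ (hTmem 0 0 (min pR ((u - 1)/β)) (min_le_left _ _))
    rw [hdecomp, hφcons] at h1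
    have h2 : min pR ((u - 1)/β) * β ≤ ((u - 1)/β) * β :=
      mul_le_mul_of_nonneg_right (min_le_right _ _) hpos.le
    rw [div_mul_cancel₀ _ hpos.ne'] at h2
    linarith
  have hsepz₀ := hsep₁ _ hz₀E
  rw [hdecomp] at hsepz₀
  have hφz₀ : φ z₀ = 0 := hφcons p₀.1 p₀.2
  have hupR : u ≤ pR * β := by
    have := hsep₂ _ (hTmem 0 0 pR le_rfl)
    rw [hdecomp, hφcons] at this
    linarith
  have hβneg : β < 0 := by
    rcases lt_or_eq_of_le hβle with h | h
    · exact h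
    · exfalso
      rw [hφz₀, h] at hsepz₀
      rw [h] at hupR
      simp at hsepz₀ hupR
      linarith
  have hββ : β⁻¹ * β = 1 := inv_mul_cancel₀ hβneg.ne
  -- the main inequality for finite values
  have hmain : ∀ z : Z, (∀ i, 0 ≤ z.2 i) → ∀ rz : ℝ,
      Fobj ε f ξhat v z.1 z.2 = ((rz : ℝ) : EReal) → pR ≤ rz + β⁻¹ * φ z := by
    intro z hK rz hFo
    have hrE : ∀ r : ℝ, rz < r → ((z, r) : Z × ℝ) ∈ E := by
      intro r hr
      exact ⟨hK, by rw [hFo]; exact_mod_cast hr⟩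
    have haff : ∀ (p q : Z × ℝ) (a b : ℝ), f₀ (a • p + b • q) = a * f₀ p + b * f₀ q := by
      intro p q a b
      rw [map_add, map_smul, map_smul, smul_eq_mul, smul_eq_mul]
    have hstep : ∀ r : ℝ, rz < r → φ z + r * β ≤ u := by
      intro r hr
      set A : ℝ := f₀ ((z₀, M + 1) : Z × ℝ) with hA
      set B : ℝ := f₀ ((z, r) : Z × ℝ) with hB
      have hseg : ∀ t : ℝ, t ∈ Set.Ioc (0:ℝ) 1 → t * A + (1 - t) * B < u := by
        intro t ht
        have hmem := hEconv.combo_interior_self_mem_interior (a := t) (b := 1 - t) hz₀E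
          (hrE r hr) ht.1 (by linarith [ht.2]) (by ring)
        have := hsep₁ _ hmem
        rwa [haff] at this
      have hg : Continuous fun t : ℝ => t * A + (1 - t) * B :=
        ((continuous_id.mul continuous_const).add
          ((continuous_const.sub continuous_id).mul continuous_const))
      have htend : Filter.Tendsto (fun t : ℝ => t * A + (1 - t) * B)
          (nhdsWithin 0 (Set.Ioi 0)) (nhds ((0:ℝ) * A + (1 - 0) * B)) :=
        (hg.tendsto 0).mono_left nhdsWithin_le_nhds
      have hBu : (0:ℝ) * A + (1 - 0) * B ≤ u := by
        refine le_of_tendsto htend ?_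
        filter_upwards [Ioc_mem_nhdsGT_of_mem ⟨le_refl (0:ℝ), zero_lt_one⟩] with t ht
        exact (hseg t ht).le
      have : B ≤ u := by norm_num at hBu; exact hBu
      rw [hB, hdecomp] at this
      exact this
    have hstep2 : ∀ r : ℝ, rz < r → pR ≤ β⁻¹ * φ z + r := by
      intro r hr
      have h1 := (hstep r hr).trans hupR
      by_contra hcon
      push_neg at hcon
      have h3 : (β⁻¹ * φ z + r - pR) * (-β) = -(β⁻¹ * β) * φ z - r * β + pR * β := by ring
      rw [hββ] at h3
      have h4 : (β⁻¹ * φ z + r - pR) * (-β) < 0 :=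
        mul_neg_of_neg_of_pos (by linarith) (by linarith)
      rw [h3] at h4
      linarith
    by_contra hcon
    push_neg at hcon
    have h5 := hstep2 ((rz + (pR - β⁻¹ * φ z)) / 2) (by linarith)
    linarith
  -- the linear functional and its realization
  set ψL : Z →ₗ[ℝ] ℝ := β⁻¹ • ((f₀ : Z × ℝ →L[ℝ] ℝ).toLinearMap ∘ₗ LinearMap.inl ℝ Z ℝ)
    with hψL
  have hψLapp : ∀ z : Z, ψL z = β⁻¹ * φ z := by
    intro z
    rw [hψL]
    simp [hφ]
  have hψLcons : ∀ (x : Vec d) (c : ℝ), ψL (((fun _ => x), fun _ => c) : Z) = 0 := by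
    intro x c
    rw [hψLapp, hφcons, mul_zero]
  obtain ⟨ν, η, hmt⟩ := realize_mterm hn hLsym hLker ψL hψLcons
  refine ⟨ν, η, fun xv lv hlv => ?_⟩
  rw [hpR]
  by_cases hcase : ∀ k, supE f ξhat k (xv (v k)) (lv (v k)) ≠ ⊤
  · have hFo := Fobj_eq_coe hN ε f ξhat v xv lv hcase
    have h6 := hmain (xv, lv) hlv (FR ε f ξhat v xv lv) hFo
    rw [← hψLapp (xv, lv), ← hmt xv lv] at h6
    rw [hFo, ← EReal.coe_add]
    exact_mod_cast h6
  · push_neg at hcase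
    obtain ⟨k₀, hk₀⟩ := hcase
    rw [Fobj_eq_top hN ε f ξhat v xv lv hk₀]
    rw [EReal.top_add_coe]
    exact le_top

end DROAux

/-- The set of saddle points of L is nonempty and the min-max equals
the max-min for L, in the extended reals. -/
theorem lagrangian_saddle_exists_and_minmax_eq_maxmin
    {d m n N : ℕ} (hn : 0 < n) (hN : 0 < N)
    (f : Vec d → Vec m → ℝ) (ξhat : Fin N → Vec m) (ε : ℝ) (hε : 0 < ε)
    (hf : ContDiff ℝ 1 (Function.uncurry f))
    (hconv : ∀ ξ : Vec m, ConvexOn ℝ Set.univ (fun x => f x ξ))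
    (v : Fin N → Fin n) (hv : Function.Surjective v)
    (Lap : Matrix (Fin n) (Fin n) ℝ) (hLsym : Lap.IsSymm) (hLpsd : Lap.PosSemidef)
    (hLker : ∀ w : Fin n → ℝ, Lap.mulVec w = 0 ↔ ∃ c : ℝ, w = fun _ => c)
    (hfin : (interior {p : Vec d × ℝ |
        0 ≤ p.2 ∧ ∃ r : ℝ, Jobj ε f ξhat p.1 p.2 = (r : EReal)}).Nonempty)
    (hopt : ∃ (xs : Vec d) (ls : ℝ), 0 ≤ ls ∧ ∀ x : Vec d, ∀ lam : ℝ, 0 ≤ lam →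
      Jobj ε f ξhat xs ls ≤ Jobj ε f ξhat x lam) :
    (∃ (xv : Fin n → Vec d) (lv : Fin n → ℝ) (ν : Fin n → ℝ) (η : Fin n → Vec d),
        IsSaddleLagr ε f ξhat v Lap xv lv ν η) ∧
    (⨅ xv : Fin n → Vec d, ⨅ lv ∈ {lv : Fin n → ℝ | ∀ i, 0 ≤ lv i},
        ⨆ ν : Fin n → ℝ, ⨆ η : Fin n → Vec d, Lagr ε f ξhat v Lap xv lv ν η)
      = ⨆ ν : Fin n → ℝ, ⨆ η : Fin n → Vec d,
          ⨅ xv : Fin n → Vec d, ⨅ lv ∈ {lv : Fin n → ℝ | ∀ i, 0 ≤ lv i},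
            Lagr ε f ξhat v Lap xv lv ν η := by
  classical
  obtain ⟨xs, ls, hls, hmin⟩ := hopt
  obtain ⟨ν, η, hkey⟩ :=
    DROAux.key_multipliers hn hN f ξhat ε hconv v hLsym hLker hfin hls hmin
  set zx : Fin n → Vec d := fun _ => xs with hzx
  set zl : Fin n → ℝ := fun _ => ls with hzl
  have hLagr_def : ∀ (xv : Fin n → Vec d) (lv : Fin n → ℝ) (ν' : Fin n → ℝ)
      (η' : Fin n → Vec d), Lagr ε f ξhat v Lap xv lv ν' η'
        = Fobj ε f ξhat v xv lv + ((DROAux.mterm Lap ν' η' xv lv : ℝ) : EReal) :=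
    fun _ _ _ _ => rfl
  have hmt0 : ∀ (ν' : Fin n → ℝ) (η' : Fin n → Vec d), DROAux.mterm Lap ν' η' zx zl = 0 := by
    intro ν' η'
    unfold DROAux.mterm
    have h1 : Lap.mulVec zl = 0 := DROAux.mulVec_const hLker ls
    have h2 : ∀ i, ∑ j, Lap i j • zx j = 0 := fun i => DROAux.smulsum_consensus hLker xs i
    rw [h1]
    simp only [Pi.zero_apply, mul_zero, Finset.sum_const_zero, zero_add]
    rw [Finset.sum_congr rfl fun i _ => by rw [h2 i]]
    simp
  have hLagr_cons : ∀ (ν' : Fin n → ℝ) (η' : Fin n → Vec d),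
      Lagr ε f ξhat v Lap zx zl ν' η' = Jobj ε f ξhat xs ls := by
    intro ν' η'
    rw [hLagr_def, hmt0]
    rw [DROAux.Fobj_consensus hn ε f ξhat v xs ls]
    simp
  have hsaddle : IsSaddleLagr ε f ξhat v Lap zx zl ν η := by
    refine ⟨fun i => hls, fun ν' η' => ?_, fun xv' lv' hlv' => ?_⟩
    · rw [hLagr_cons, hLagr_cons]
    · rw [hLagr_cons, hLagr_def]
      exact hkey xv' lv' hlv'
  refine ⟨⟨zx, zl, ν, η, hsaddle⟩, ?_⟩
  apply le_antisymm
  · have h1 : (⨅ xv : Fin n → Vec d, ⨅ lv ∈ {lv : Fin n → ℝ | ∀ i, 0 ≤ lv i},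
        ⨆ ν' : Fin n → ℝ, ⨆ η' : Fin n → Vec d, Lagr ε f ξhat v Lap xv lv ν' η')
        ≤ ⨆ ν' : Fin n → ℝ, ⨆ η' : Fin n → Vec d, Lagr ε f ξhat v Lap zx zl ν' η' := by
      refine le_trans (iInf_le _ zx) ?_
      exact iInf₂_le zl (fun i => hls)
    have h2 : (⨆ ν' : Fin n → ℝ, ⨆ η' : Fin n → Vec d, Lagr ε f ξhat v Lap zx zl ν' η')
        ≤ Lagr ε f ξhat v Lap zx zl ν η :=
      iSup_le fun ν' => iSup_le fun η' => hsaddle.2.1 ν' η'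
    have h3 : Lagr ε f ξhat v Lap zx zl ν η
        ≤ ⨅ xv : Fin n → Vec d, ⨅ lv ∈ {lv : Fin n → ℝ | ∀ i, 0 ≤ lv i},
            Lagr ε f ξhat v Lap xv lv ν η :=
      le_iInf fun xv => le_iInf₂ fun lv hlv => hsaddle.2.2 xv lv hlv
    have h4 : (⨅ xv : Fin n → Vec d, ⨅ lv ∈ {lv : Fin n → ℝ | ∀ i, 0 ≤ lv i},
        Lagr ε f ξhat v Lap xv lv ν η)
        ≤ ⨆ ν' : Fin n → ℝ, ⨆ η' : Fin n → Vec d,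
            ⨅ xv : Fin n → Vec d, ⨅ lv ∈ {lv : Fin n → ℝ | ∀ i, 0 ≤ lv i},
              Lagr ε f ξhat v Lap xv lv ν' η' :=
      le_iSup_of_le ν (le_iSup_of_le η le_rfl)
    exact h1.trans (h2.trans (h3.trans h4))
  · refine iSup_le fun ν' => iSup_le fun η' =>
      le_iInf fun xv => le_iInf₂ fun lv hlv => ?_
    refine le_trans (le_trans (iInf_le _ xv) (iInf₂_le lv hlv)) ?_
    exact le_iSup_of_le ν' (le_iSup_of_le η' le_rfl)


end
end

section
/- (i) If (x̄_v, λ̄_v, ν̄, η̄) is a saddle point of L over (ℝ^{nd} × ℝ_{≥0}ⁿ) × (ℝⁿ × ℝ^{nd}), then (x̄_v, λ̄_v) minimizes F over the feasible set of the distributed problem. (ii) If (x̄_v, λ̄_v) minimizes F over the feasible set of the distributed problem, then there exists (ν̄, η̄) ∈ ℝⁿ × ℝ^{nd} such that (x̄_v, λ̄_v, ν̄, η̄) is a saddle point of L over (ℝ^{nd} × ℝ_{≥0}ⁿ) × (ℝⁿ × ℝ^{nd}). -/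
open scoped BigOperators RealInnerProductSpace Topology
open Finset

noncomputable section

namespace DroAux

variable {α : Type*}

lemma ereal_coe_sum (s : Finset α) (f : α → ℝ) :
    ((∑ a ∈ s, f a : ℝ) : EReal) = ∑ a ∈ s, (f a : EReal) := by
  induction s using Finset.cons_induction with
  | empty => simp
  | cons a s ha ih => rw [Finset.sum_cons, Finset.sum_cons, EReal.coe_add, ih]

lemma ereal_sum_ne_bot {s : Finset α} {f : α → EReal} (h : ∀ a ∈ s, f a ≠ ⊥) :
    ∑ a ∈ s, f a ≠ ⊥ := by
  induction s using Finset.cons_induction with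
  | empty => simp
  | cons a s ha ih =>
      rw [Finset.sum_cons]
      rw [Ne, EReal.add_eq_bot_iff]
      push_neg
      exact ⟨h a (Finset.mem_cons_self a s), ih fun b hb => h b (Finset.mem_cons_of_mem hb)⟩

lemma ereal_sum_eq_top [DecidableEq α] {s : Finset α} {f : α → EReal} (h : ∀ a ∈ s, f a ≠ ⊥)
    {k : α} (hk : k ∈ s) (htop : f k = ⊤) : ∑ a ∈ s, f a = ⊤ := by
  rw [← Finset.add_sum_erase _ f hk, htop]
  exact EReal.top_add_of_ne_bot (ereal_sum_ne_bot fun b hb => h b (Finset.mem_of_mem_erase hb))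

lemma ereal_sum_eq_coe {s : Finset α} {f : α → EReal} (h : ∀ a ∈ s, f a ≠ ⊥)
    (h' : ∀ a ∈ s, f a ≠ ⊤) :
    ∑ a ∈ s, f a = ((∑ a ∈ s, (f a).toReal : ℝ) : EReal) := by
  rw [ereal_coe_sum]
  exact Finset.sum_congr rfl fun a ha => (EReal.coe_toReal (h' a ha) (h a ha)).symm

variable {d m N : ℕ}

/-- per-sample sup in EReal -/
def Hk (f : Vec d → Vec m → ℝ) (ξhat : Fin N → Vec m) (k : Fin N) (x : Vec d) (l : ℝ) : EReal :=
  ⨆ ξ : Vec m, ((gk f ξhat k x l ξ : ℝ) : EReal)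

lemma Hk_ne_bot (f : Vec d → Vec m → ℝ) (ξhat : Fin N → Vec m) (k : Fin N) (x : Vec d) (l : ℝ) :
    Hk f ξhat k x l ≠ ⊥ :=
  ne_of_gt <| lt_of_lt_of_le (EReal.bot_lt_coe (gk f ξhat k x l 0))
    (le_iSup (fun ξ : Vec m => ((gk f ξhat k x l ξ : ℝ) : EReal)) (0 : Vec m))

lemma gk_le_of_Hk_le {f : Vec d → Vec m → ℝ} {ξhat : Fin N → Vec m} {k : Fin N}
    {x : Vec d} {l r : ℝ} (h : Hk f ξhat k x l ≤ (r : EReal)) (ξ : Vec m) :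
    gk f ξhat k x l ξ ≤ r :=
  EReal.coe_le_coe_iff.mp ((le_iSup (fun ξ => ((gk f ξhat k x l ξ : ℝ) : EReal)) ξ).trans h)

lemma Hk_combo {f : Vec d → Vec m → ℝ} {ξhat : Fin N → Vec m} {k : Fin N}
    (hconv : ∀ ξ : Vec m, ConvexOn ℝ Set.univ (fun x => f x ξ))
    {θ θ' : ℝ} (hθ : 0 ≤ θ) (hθ' : 0 ≤ θ') (hs : θ + θ' = 1)
    {x₁ x₂ : Vec d} {l₁ l₂ r₁ r₂ : ℝ}
    (h₁ : Hk f ξhat k x₁ l₁ ≤ (r₁ : EReal)) (h₂ : Hk f ξhat k x₂ l₂ ≤ (r₂ : EReal)) :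
    Hk f ξhat k (θ • x₁ + θ' • x₂) (θ * l₁ + θ' * l₂) ≤ ((θ * r₁ + θ' * r₂ : ℝ) : EReal) := by
  refine iSup_le fun ξ => ?_
  rw [EReal.coe_le_coe_iff]
  have hg₁ := gk_le_of_Hk_le h₁ ξ
  have hg₂ := gk_le_of_Hk_le h₂ ξ
  have hf := (hconv ξ).2 (Set.mem_univ x₁) (Set.mem_univ x₂) hθ hθ' hs
  simp only [smul_eq_mul] at hf
  unfold gk at *
  have e₁ : θ * (f x₁ ξ - l₁ * ‖ξ - ξhat k‖ ^ 2) ≤ θ * r₁ := mul_le_mul_of_nonneg_left hg₁ hθ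
  have e₂ : θ' * (f x₂ ξ - l₂ * ‖ξ - ξhat k‖ ^ 2) ≤ θ' * r₂ := mul_le_mul_of_nonneg_left hg₂ hθ'
  nlinarith [hf]

end DroAux

namespace DroAux

variable {d m n N : ℕ}

abbrev Z (d n : ℕ) := (Fin n → Vec d) × (Fin n → ℝ)

section Zlevel

variable (ε : ℝ) (f : Vec d → Vec m → ℝ) (ξhat : Fin N → Vec m) (v : Fin N → Fin n)

def Fz (z : Z d n) : EReal := Fobj ε f ξhat v z.1 z.2

def Dom (z : Z d n) : Prop := ∀ k : Fin N, Hk f ξhat k (z.1 (v k)) (z.2 (v k)) ≠ ⊤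

def Fhat (z : Z d n) : ℝ :=
  ε ^ 2 / (n : ℝ) * ∑ i, z.2 i
    + (1 / (N : ℝ)) * ∑ k : Fin N, (Hk f ξhat k (z.1 (v k)) (z.2 (v k))).toReal

lemma Fz_def (z : Z d n) :
    Fz ε f ξhat v z = ((ε ^ 2 / (n : ℝ) * ∑ i, z.2 i : ℝ) : EReal)
      + ((1 / (N : ℝ) : ℝ) : EReal) * ∑ k : Fin N, Hk f ξhat k (z.1 (v k)) (z.2 (v k)) := rfl

variable {ε f ξhat v}

lemma Fz_eq_coe {z : Z d n} (h : Dom f ξhat v z) :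
    Fz ε f ξhat v z = ((Fhat ε f ξhat v z : ℝ) : EReal) := by
  rw [Fz_def, ereal_sum_eq_coe (fun k _ => Hk_ne_bot f ξhat k _ _) (fun k _ => h k)]
  rw [← EReal.coe_mul, ← EReal.coe_add]
  rfl

lemma Fz_eq_top (hN : 0 < N) {z : Z d n} (h : ¬ Dom f ξhat v z) :
    Fz ε f ξhat v z = ⊤ := by
  simp only [Dom, not_forall, not_not] at h
  obtain ⟨k, hk⟩ := h
  have hsum := ereal_sum_eq_top (s := Finset.univ)
    (f := fun a : Fin N => Hk f ξhat a (z.1 (v a)) (z.2 (v a)))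
    (fun a _ => Hk_ne_bot f ξhat a _ _) (Finset.mem_univ k) hk
  rw [Fz_def, hsum,
    EReal.coe_mul_top_of_pos (by positivity : (0:ℝ) < 1 / (N:ℝ)), EReal.coe_add_top]

lemma Fz_ne_bot (hN : 0 < N) (z : Z d n) : Fz ε f ξhat v z ≠ ⊥ := by
  by_cases h : Dom f ξhat v z
  · rw [Fz_eq_coe h]; exact EReal.coe_ne_bot _
  · rw [Fz_eq_top hN h]; exact bot_lt_top.ne'

lemma Dom_of_lt_top (hN : 0 < N) {z : Z d n} (h : Fz ε f ξhat v z ≠ ⊤) :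
    Dom f ξhat v z := by
  by_contra hc
  exact h (Fz_eq_top hN hc)

lemma Jobj_finite_imp (hN : 0 < N) {x : Vec d} {l : ℝ} {r : ℝ}
    (h : Jobj ε f ξhat x l = (r : EReal)) (k : Fin N) : Hk f ξhat k x l ≠ ⊤ := by
  intro hk
  have : Jobj ε f ξhat x l = ⊤ := by
    have hsum := ereal_sum_eq_top (s := Finset.univ)
      (f := fun a : Fin N => Hk f ξhat a x l)
      (fun a _ => Hk_ne_bot f ξhat a _ _) (Finset.mem_univ k) hk
    show ((l * ε ^ 2 : ℝ) : EReal)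
        + ((1 / (N : ℝ) : ℝ) : EReal) * ∑ a : Fin N, Hk f ξhat a x l = ⊤
    rw [hsum,
      EReal.coe_mul_top_of_pos (by positivity : (0:ℝ) < 1 / (N:ℝ)), EReal.coe_add_top]
  rw [h] at this
  exact EReal.coe_ne_top r this

/-- domain-with-positivity set -/
def Cset (f : Vec d → Vec m → ℝ) (ξhat : Fin N → Vec m) (v : Fin N → Fin n) : Set (Z d n) :=
  {z | (∀ i, 0 ≤ z.2 i) ∧ Dom f ξhat v z}

lemma combo_coord_fst (z₁ z₂ : Z d n) (θ θ' : ℝ) (i : Fin n) :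
    (θ • z₁ + θ' • z₂).1 i = θ • z₁.1 i + θ' • z₂.1 i := rfl

lemma combo_coord_snd (z₁ z₂ : Z d n) (θ θ' : ℝ) (i : Fin n) :
    (θ • z₁ + θ' • z₂).2 i = θ * z₁.2 i + θ' * z₂.2 i := rfl

lemma Hk_toReal_combo (hconv : ∀ ξ : Vec m, ConvexOn ℝ Set.univ (fun x => f x ξ))
    {z₁ z₂ : Z d n} (h₁ : Dom f ξhat v z₁) (h₂ : Dom f ξhat v z₂)
    {θ θ' : ℝ} (hθ : 0 ≤ θ) (hθ' : 0 ≤ θ') (hs : θ + θ' = 1) (k : Fin N) :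
    Hk f ξhat k ((θ • z₁ + θ' • z₂).1 (v k)) ((θ • z₁ + θ' • z₂).2 (v k))
      ≤ ((θ * (Hk f ξhat k (z₁.1 (v k)) (z₁.2 (v k))).toReal
          + θ' * (Hk f ξhat k (z₂.1 (v k)) (z₂.2 (v k))).toReal : ℝ) : EReal) := by
  rw [combo_coord_fst, combo_coord_snd]
  exact Hk_combo hconv hθ hθ' hs
    (le_of_eq (EReal.coe_toReal (h₁ k) (Hk_ne_bot f ξhat k _ _)).symm)
    (le_of_eq (EReal.coe_toReal (h₂ k) (Hk_ne_bot f ξhat k _ _)).symm)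

lemma Dom_combo (hconv : ∀ ξ : Vec m, ConvexOn ℝ Set.univ (fun x => f x ξ))
    {z₁ z₂ : Z d n} (h₁ : Dom f ξhat v z₁) (h₂ : Dom f ξhat v z₂)
    {θ θ' : ℝ} (hθ : 0 ≤ θ) (hθ' : 0 ≤ θ') (hs : θ + θ' = 1) :
    Dom f ξhat v (θ • z₁ + θ' • z₂) := fun k =>
  ne_top_of_le_ne_top (EReal.coe_ne_top _) (Hk_toReal_combo hconv h₁ h₂ hθ hθ' hs k)

lemma convex_Cset (hconv : ∀ ξ : Vec m, ConvexOn ℝ Set.univ (fun x => f x ξ)) :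
    Convex ℝ (Cset f ξhat v) := by
  intro z₁ h₁ z₂ h₂ θ θ' hθ hθ' hs
  refine ⟨fun i => ?_, Dom_combo hconv h₁.2 h₂.2 hθ hθ' hs⟩
  rw [combo_coord_snd]
  have := h₁.1 i; have := h₂.1 i
  positivity

lemma Fhat_combo (hn : 0 < n) (hN : 0 < N)
    (hconv : ∀ ξ : Vec m, ConvexOn ℝ Set.univ (fun x => f x ξ))
    {z₁ z₂ : Z d n} (h₁ : Dom f ξhat v z₁) (h₂ : Dom f ξhat v z₂)
    {θ θ' : ℝ} (hθ : 0 ≤ θ) (hθ' : 0 ≤ θ') (hs : θ + θ' = 1) :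
    Fhat ε f ξhat v (θ • z₁ + θ' • z₂)
      ≤ θ * Fhat ε f ξhat v z₁ + θ' * Fhat ε f ξhat v z₂ := by
  have hsum : ∑ k : Fin N, (Hk f ξhat k ((θ • z₁ + θ' • z₂).1 (v k))
        ((θ • z₁ + θ' • z₂).2 (v k))).toReal
      ≤ θ * (∑ k : Fin N, (Hk f ξhat k (z₁.1 (v k)) (z₁.2 (v k))).toReal)
        + θ' * (∑ k : Fin N, (Hk f ξhat k (z₂.1 (v k)) (z₂.2 (v k))).toReal) := by
    rw [Finset.mul_sum, Finset.mul_sum, ← Finset.sum_add_distrib]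
    refine Finset.sum_le_sum fun k _ => ?_
    have h := Hk_toReal_combo hconv h₁ h₂ hθ hθ' hs k
    have := EReal.toReal_le_toReal h (Hk_ne_bot f ξhat k _ _) (EReal.coe_ne_top _)
    rwa [EReal.toReal_coe] at this
  have hlin : ∑ i, (θ • z₁ + θ' • z₂).2 i = θ * ∑ i, z₁.2 i + θ' * ∑ i, z₂.2 i := by
    rw [Finset.mul_sum, Finset.mul_sum, ← Finset.sum_add_distrib]
    exact Finset.sum_congr rfl fun i _ => combo_coord_snd z₁ z₂ θ θ' i
  unfold Fhat
  rw [hlin]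
  have hN' : (0:ℝ) ≤ 1 / (N:ℝ) := by positivity
  nlinarith [mul_le_mul_of_nonneg_left hsum hN']

lemma convexOn_Fhat (hn : 0 < n) (hN : 0 < N)
    (hconv : ∀ ξ : Vec m, ConvexOn ℝ Set.univ (fun x => f x ξ)) :
    ConvexOn ℝ (Cset f ξhat v) (Fhat ε f ξhat v) := by
  refine ⟨convex_Cset hconv, fun z₁ h₁ z₂ h₂ θ θ' hθ hθ' hs => ?_⟩
  simpa using Fhat_combo (ε := ε) hn hN hconv h₁.2 h₂.2 hθ hθ' hs

end Zlevel

end DroAux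

namespace DroAux

variable {d m n N : ℕ}

section Amap

variable (Lap : Matrix (Fin n) (Fin n) ℝ)

def Amap : Z d n →ₗ[ℝ] Z d n where
  toFun z := (fun i => ∑ j : Fin n, Lap i j • z.1 j, Lap.mulVec z.2)
  map_add' z w := by
    refine Prod.ext ?_ ?_
    · funext i
      simp [Finset.sum_add_distrib, smul_add]
    · simp [Matrix.mulVec_add]
  map_smul' c z := by
    refine Prod.ext ?_ ?_
    · funext i
      simp [Finset.smul_sum, smul_comm c]
    · simp [Matrix.mulVec_smul]

lemma Amap_fst (z : Z d n) : (Amap Lap z).1 = fun i => ∑ j : Fin n, Lap i j • z.1 j := rfl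
lemma Amap_snd (z : Z d n) : (Amap Lap z).2 = Lap.mulVec z.2 := rfl

def pen (ν : Fin n → ℝ) (η : Fin n → Vec d) (z : Z d n) : ℝ :=
  ∑ i, ν i * Lap.mulVec z.2 i + ∑ i, (inner ℝ (η i) (∑ j : Fin n, Lap i j • z.1 j) : ℝ)

variable {Lap}

lemma Lagr_eq_Fz_pen (ε : ℝ) (f : Vec d → Vec m → ℝ) (ξhat : Fin N → Vec m)
    (v : Fin N → Fin n) (z : Z d n) (ν : Fin n → ℝ) (η : Fin n → Vec d) :
    Lagr ε f ξhat v Lap z.1 z.2 ν η = Fz ε f ξhat v z + ((pen Lap ν η z : ℝ) : EReal) := rfl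

lemma feas_iff (z : Z d n) : z ∈ Feas (d := d) Lap ↔ (∀ i, 0 ≤ z.2 i) ∧ Amap Lap z = 0 := by
  constructor
  · rintro ⟨h1, h2, h3⟩
    refine ⟨h1, Prod.ext ?_ ?_⟩
    · funext i; exact h3 i
    · exact h2
  · rintro ⟨h1, h2⟩
    exact ⟨h1, congrArg Prod.snd h2, fun i => congrFun (congrArg Prod.fst h2) i⟩

lemma pen_eq_zero_of_feas {z : Z d n} (hz : z ∈ Feas (d := d) Lap)
    (ν : Fin n → ℝ) (η : Fin n → Vec d) : pen Lap ν η z = 0 := by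
  obtain ⟨h1, h2, h3⟩ := hz
  unfold pen
  rw [h2]
  simp only [Pi.zero_apply, mul_zero, Finset.sum_const_zero, zero_add]
  refine Finset.sum_eq_zero fun i _ => ?_
  rw [h3 i, inner_zero_right]

end Amap

section Repr

variable (L : Z d n →L[ℝ] ℝ)

def νof (i : Fin n) : ℝ := L (0, Pi.single i 1)

def ηof (i : Fin n) : Vec d :=
  (WithLp.equiv 2 (Fin d → ℝ)).symm fun a => L (Pi.single i (EuclideanSpace.single a 1), 0)

lemma ηof_apply (i : Fin n) (a : Fin d) :
    ηof L i a = L (Pi.single i (EuclideanSpace.single a 1), 0) := rfl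

lemma repr_snd (w : Fin n → ℝ) : L (0, w) = ∑ i, νof L i * w i := by
  have hw : (((0 : Fin n → Vec d), w) : Z d n)
      = ∑ i, (w i • (((0 : Fin n → Vec d), Pi.single i (1:ℝ)) : Z d n)) := by
    refine Prod.ext ?_ ?_
    · rw [Prod.fst_sum]
      simp
    · rw [Prod.snd_sum]
      simp only [Prod.smul_mk]
      funext j
      simp [Finset.sum_apply, Pi.single_apply]
  rw [hw, map_sum]
  refine Finset.sum_congr rfl fun i _ => ?_
  rw [map_smul]
  simp [νof, mul_comm]

lemma single_decomp (i : Fin n) (x : Vec d) :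
    (Pi.single i x : Fin n → Vec d)
      = ∑ a : Fin d, x a • (Pi.single i (EuclideanSpace.single a 1) : Fin n → Vec d) := by
  have hx : x = ∑ a : Fin d, x a • (EuclideanSpace.single a (1:ℝ)) := by
    have := (EuclideanSpace.basisFun (Fin d) ℝ).sum_repr x
    simp only [EuclideanSpace.basisFun_repr, EuclideanSpace.basisFun_apply] at this
    exact this.symm
  calc (Pi.single i x : Fin n → Vec d)
      = LinearMap.single ℝ (fun _ : Fin n => Vec d) i x := rfl
    _ = ∑ a : Fin d, x a • (Pi.single i (EuclideanSpace.single a 1) : Fin n → Vec d) := by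
        conv_lhs => rw [hx]
        rw [map_sum]
        refine Finset.sum_congr rfl fun a _ => ?_
        rw [map_smul]
        rfl

lemma inner_ηof (i : Fin n) (x : Vec d) :
    (inner ℝ (ηof L i) x : ℝ) = L (Pi.single i x, 0) := by
  have hdec : ((Pi.single i x : Fin n → Vec d), (0 : Fin n → ℝ))
      = ∑ a : Fin d, x a • (((Pi.single i (EuclideanSpace.single a 1) : Fin n → Vec d),
          (0 : Fin n → ℝ)) : Z d n) := by
    refine Prod.ext ?_ ?_
    · rw [Prod.fst_sum]
      simp only [Prod.smul_mk]
      exact single_decomp i x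
    · rw [Prod.snd_sum]
      simp
  rw [hdec, map_sum]
  rw [PiLp.inner_apply]
  refine Finset.sum_congr rfl fun a _ => ?_
  rw [map_smul]
  simp [ηof_apply, RCLike.inner_apply, starRingEnd_apply, mul_comm]

lemma repr_fst (u : Fin n → Vec d) :
    L (u, 0) = ∑ i, (inner ℝ (ηof L i) (u i) : ℝ) := by
  have hu : ((u, (0 : Fin n → ℝ)) : Z d n)
      = ∑ i, (((Pi.single i (u i) : Fin n → Vec d), (0 : Fin n → ℝ)) : Z d n) := by
    refine Prod.ext ?_ ?_
    · rw [Prod.fst_sum]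
      exact (Finset.univ_sum_single u).symm
    · rw [Prod.snd_sum]; simp
  rw [hu, map_sum]
  exact Finset.sum_congr rfl fun i _ => (inner_ηof L i (u i)).symm

lemma repr_full (z : Z d n) :
    L z = ∑ i, (inner ℝ (ηof L i) (z.1 i) : ℝ) + ∑ i, νof L i * z.2 i := by
  have hz : z = (z.1, (0 : Fin n → ℝ)) + ((0 : Fin n → Vec d), z.2) := by
    refine Prod.ext ?_ ?_ <;> simp
  have hL := congrArg L hz
  rw [map_add] at hL
  rw [hL, repr_fst, repr_snd]

lemma pen_of_repr (Lap : Matrix (Fin n) (Fin n) ℝ) (z : Z d n) :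
    pen Lap (νof L) (ηof L) z = L (Amap Lap z) := by
  rw [repr_full L (Amap Lap z), Amap_fst, Amap_snd]
  unfold pen
  rw [add_comm]

end Repr

end DroAux

namespace DroAux

variable {d m n N : ℕ}

lemma combo_lt {θ θ' a b p q : ℝ} (hθ : 0 ≤ θ) (hθ' : 0 ≤ θ') (hs : θ + θ' = 1)
    (h1 : a < p) (h2 : b < q) : θ * a + θ' * b < θ * p + θ' * q := by
  rcases eq_or_lt_of_le hθ with h | h
  · have hθ'1 : θ' = 1 := by linarith
    rw [← h, hθ'1]
    simpa using h2
  · exact add_lt_add_of_lt_of_le (mul_lt_mul_of_pos_left h1 h)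
      (mul_le_mul_of_nonneg_left h2.le hθ')

set_option maxHeartbeats 1000000 in
lemma exists_multiplier
    (hn : 0 < n) (hN : 0 < N) (ε : ℝ) (f : Vec d → Vec m → ℝ) (ξhat : Fin N → Vec m)
    (v : Fin N → Fin n) (Lap : Matrix (Fin n) (Fin n) ℝ)
    (hconv : ∀ ξ : Vec m, ConvexOn ℝ Set.univ (fun x => f x ξ))
    {zbar z₀ : Z d n}
    (hz₀C : z₀ ∈ interior (Cset f ξhat v))
    (hz₀F : z₀ ∈ Feas (d := d) Lap)
    (hzF : zbar ∈ Feas (d := d) Lap)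
    (hopt : ∀ p ∈ Feas (d := d) Lap, Fz ε f ξhat v zbar ≤ Fz ε f ξhat v p) :
    ∃ (ν : Fin n → ℝ) (η : Fin n → Vec d), ∀ z : Z d n, (∀ i, 0 ≤ z.2 i) →
      Fz ε f ξhat v zbar ≤ Fz ε f ξhat v z + ((pen Lap ν η z : ℝ) : EReal) := by
  classical
  have hz₀Cm : z₀ ∈ Cset f ξhat v := interior_subset hz₀C
  have hFz₀ : Fz ε f ξhat v z₀ = ((Fhat ε f ξhat v z₀ : ℝ) : EReal) := Fz_eq_coe hz₀Cm.2
  have hle := hopt z₀ hz₀F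
  have hnetop : Fz ε f ξhat v zbar ≠ ⊤ := by
    intro h; rw [h, hFz₀] at hle; exact (EReal.coe_ne_top _) (top_le_iff.mp hle)
  have hDomz : Dom f ξhat v zbar := Dom_of_lt_top hN hnetop
  set cb := Fhat ε f ξhat v zbar with hcb
  have hFzbar : Fz ε f ξhat v zbar = ((cb : ℝ) : EReal) := Fz_eq_coe hDomz
  -- the constraint map and projections
  set A : Z d n →ₗ[ℝ] Z d n := Amap (d := d) Lap with hA
  set R : Submodule ℝ (Z d n) := LinearMap.range A with hR
  obtain ⟨K, hK⟩ := Submodule.exists_isCompl R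
  set π' : Z d n →ₗ[ℝ] R := R.projectionOnto K hK with hπ'
  set π : Z d n →ₗ[ℝ] Z d n := R.subtype.comp π' with hπ
  obtain ⟨σ, hσ⟩ := A.rangeRestrict.exists_rightInverse_of_surjective A.range_rangeRestrict
  set τ : Z d n →ₗ[ℝ] Z d n := σ.comp π' with hτ
  have hAσ : ∀ y : R, A (σ y) = (y : Z d n) := by
    intro y
    have h1 : A.rangeRestrict (σ y) = y := DFunLike.congr_fun hσ y
    calc A (σ y) = ((A.rangeRestrict (σ y) : Z d n)) := rfl
      _ = y := by rw [h1]
  have hAτ : ∀ c, A (τ c) = π c := fun c => hAσ (π' c)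
  have hπR : ∀ z : Z d n, π (A z) = A z := by
    intro z
    have h1 := Submodule.linearProjOfIsCompl_apply_left hK
      (⟨A z, LinearMap.mem_range_self A z⟩ : R)
    show (π' (A z) : Z d n) = A z
    rw [show π' (A z) = π' ((⟨A z, LinearMap.mem_range_self A z⟩ : R) : Z d n) from rfl, h1]
  have hAfeas : ∀ {z : Z d n}, z ∈ Feas (d := d) Lap → A z = 0 := fun hz => ((feas_iff _).mp hz).2
  -- continuity of Fhat near z₀
  set T := Fhat ε f ξhat v z₀ + 1 with hT
  have hconvF : ConvexOn ℝ (Cset f ξhat v) (Fhat ε f ξhat v) := convexOn_Fhat hn hN hconv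
  have hcont : ContinuousOn (Fhat ε f ξhat v) (interior (Cset f ξhat v)) :=
    hconvF.continuousOn_interior
  have hca : ContinuousAt (Fhat ε f ξhat v) z₀ :=
    hcont.continuousAt (isOpen_interior.mem_nhds hz₀C)
  have hUmem : (interior (Cset f ξhat v) ∩ (Fhat ε f ξhat v) ⁻¹' (Set.Iio T)) ∈ 𝓝 z₀ :=
    Filter.inter_mem (isOpen_interior.mem_nhds hz₀C)
      (hca.preimage_mem_nhds (Iio_mem_nhds (show Fhat ε f ξhat v z₀ < T by rw [hT]; linarith)))
  have hτcont : Continuous τ := τ.continuous_of_finiteDimensional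
  have hφ : Continuous (fun c : Z d n => z₀ + τ c) := continuous_const.add hτcont
  have hpre : (fun c : Z d n => z₀ + τ c) ⁻¹'
      (interior (Cset f ξhat v) ∩ (Fhat ε f ξhat v) ⁻¹' (Set.Iio T)) ∈ 𝓝 (0 : Z d n) := by
    apply (hφ.continuousAt (x := (0 : Z d n))).preimage_mem_nhds
    simp only [map_zero, add_zero]
    exact hUmem
  obtain ⟨ρ, hρpos, hball⟩ := Metric.mem_nhds_iff.mp hpre
  -- the convex set for separation
  set SS : Set (Z d n × ℝ) := {p | ∃ z : Z d n, (∀ i, 0 ≤ z.2 i) ∧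
      Fz ε f ξhat v z < ((p.2 : ℝ) : EReal) ∧ π p.1 = A z} with hSS
  have hSSconv : Convex ℝ SS := by
    rintro p ⟨zp, hzp1, hzp2, hzp3⟩ q ⟨zq, hzq1, hzq2, hzq3⟩ θ θ' hθ hθ' hs
    have hDp : Dom f ξhat v zp := Dom_of_lt_top hN (fun h => by
      rw [h] at hzp2; exact (not_top_lt hzp2))
    have hDq : Dom f ξhat v zq := Dom_of_lt_top hN (fun h => by
      rw [h] at hzq2; exact (not_top_lt hzq2))
    refine ⟨θ • zp + θ' • zq, fun i => ?_, ?_, ?_⟩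
    · rw [combo_coord_snd]
      have := hzp1 i; have := hzq1 i
      positivity
    · have hD := Dom_combo hconv hDp hDq hθ hθ' hs
      rw [Fz_eq_coe hD]
      rw [Fz_eq_coe hDp] at hzp2
      rw [Fz_eq_coe hDq] at hzq2
      rw [EReal.coe_lt_coe_iff] at hzp2 hzq2
      have h1 := Fhat_combo (ε := ε) hn hN hconv hDp hDq hθ hθ' hs
      have h2 : θ * Fhat ε f ξhat v zp + θ' * Fhat ε f ξhat v zq
          < θ * p.2 + θ' * q.2 := combo_lt hθ hθ' hs hzp2 hzq2
      have : (θ • p + θ' • q).2 = θ * p.2 + θ' * q.2 := rfl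
      rw [this, EReal.coe_lt_coe_iff]
      linarith
    · have : (θ • p + θ' • q).1 = θ • p.1 + θ' • q.1 := rfl
      rw [this, map_add, map_smul, map_smul, hzp3, hzq3, ← map_smul, ← map_smul, ← map_add]
  have hxnot : (((0 : Z d n), cb) : Z d n × ℝ) ∉ SS := by
    rintro ⟨z, hz1, hz2, hz3⟩
    rw [map_zero] at hz3
    have hzF' : z ∈ Feas (d := d) Lap := by
      rw [feas_iff]
      exact ⟨hz1, hz3.symm⟩
    have := hopt z hzF'
    rw [hFzbar] at this
    exact absurd (lt_of_le_of_lt this hz2) (lt_irrefl _)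
  -- open subset of SS
  set V : Set (Z d n × ℝ) := Metric.ball (0 : Z d n) ρ ×ˢ Set.Ioi T with hV
  have hVsub : V ⊆ SS := by
    rintro ⟨c, t⟩ ⟨hc, ht⟩
    have hcU := hball hc
    simp only [Set.mem_preimage, Set.mem_inter_iff, Set.mem_setOf_eq] at hcU
    obtain ⟨hcC, hcT⟩ := hcU
    have hmem : z₀ + τ c ∈ Cset f ξhat v := interior_subset hcC
    refine ⟨z₀ + τ c, hmem.1, ?_, ?_⟩
    · rw [Fz_eq_coe hmem.2, EReal.coe_lt_coe_iff]
      have : Fhat ε f ξhat v (z₀ + τ c) < T := hcT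
      have ht' : T < t := ht
      linarith
    · show π c = A (z₀ + τ c)
      rw [map_add, hAfeas hz₀F, zero_add, hAτ]
  have hVopen : IsOpen V := Metric.isOpen_ball.prod isOpen_Ioi
  have hp₀V : (((0 : Z d n), T + 1) : Z d n × ℝ) ∈ V :=
    ⟨Metric.mem_ball_self hρpos, by simp⟩
  have hp₀int : (((0 : Z d n), T + 1) : Z d n × ℝ) ∈ interior SS :=
    interior_maximal hVsub hVopen hp₀V
  -- separation
  obtain ⟨l, hl⟩ := geometric_hahn_banach_open_point (hSSconv.interior) isOpen_interior
    (fun h => hxnot (interior_subset h))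
  have hlle : ∀ p ∈ SS, l p ≤ l (((0 : Z d n), cb) : Z d n × ℝ) := by
    intro p hp
    set p₀ : Z d n × ℝ := ((0 : Z d n), T + 1) with hp₀
    have key : ∀ t : ℝ, t ∈ Set.Ioc (0:ℝ) 1 → l (p + t • (p₀ - p)) < l ((0 : Z d n), cb) :=
      fun t ht => hl _ (hSSconv.add_smul_sub_mem_interior hp hp₀int ht)
    have hc : Continuous fun t : ℝ => l (p + t • (p₀ - p)) :=
      l.continuous.comp (continuous_const.add (continuous_id.smul continuous_const))
    have htend : Filter.Tendsto (fun t : ℝ => l (p + t • (p₀ - p))) (𝓝[>] (0:ℝ))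
        (𝓝 (l p)) := by
      have h2 := hc.tendsto 0
      simp only [zero_smul, add_zero] at h2
      exact h2.mono_left nhdsWithin_le_nhds
    exact le_of_tendsto htend (Filter.eventually_of_mem
      (Ioc_mem_nhdsGT one_pos) fun t ht => (key t ht).le)
  -- decompose l
  set lz : Z d n →L[ℝ] ℝ := l.comp (ContinuousLinearMap.inl ℝ (Z d n) ℝ) with hlz
  set s : ℝ := l (((0 : Z d n), (1:ℝ)) : Z d n × ℝ) with hs
  have hldec : ∀ (c : Z d n) (t : ℝ), l ((c, t) : Z d n × ℝ) = lz c + t * s := by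
    intro c t
    have hct : ((c, t) : Z d n × ℝ) = ((c, 0) : Z d n × ℝ)
        + t • (((0 : Z d n), (1:ℝ)) : Z d n × ℝ) := by
      refine Prod.ext ?_ ?_ <;> simp
    rw [hct, map_add, map_smul]
    simp only [hlz, ContinuousLinearMap.comp_apply, ContinuousLinearMap.inl_apply,
      smul_eq_mul]
    rfl
  have hlx : l (((0 : Z d n), cb) : Z d n × ℝ) = cb * s := by
    rw [hldec, map_zero, zero_add]
  -- s < 0
  have hsle : s ≤ 0 := by
    have hmem : (((0 : Z d n), cb + 1) : Z d n × ℝ) ∈ SS := by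
      refine ⟨zbar, hzF.1, ?_, ?_⟩
      · show Fz ε f ξhat v zbar < ((cb + 1 : ℝ) : EReal)
        rw [hFzbar, EReal.coe_lt_coe_iff]; linarith
      · rw [map_zero, hAfeas hzF]
    have := hlle _ hmem
    rw [hldec, hlx, map_zero, zero_add] at this
    nlinarith
  have hslt : s < 0 := by
    rcases lt_or_eq_of_le hsle with h | h
    · exact h
    · exfalso
      have h2 := hl _ hp₀int
      rw [hldec, hlx, map_zero, zero_add, h] at h2
      simp at h2
  -- key inequality
  have hstep : ∀ z : Z d n, (∀ i, 0 ≤ z.2 i) → Dom f ξhat v z → ∀ u : ℝ, 0 < u →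
      cb ≤ Fhat ε f ξhat v z + u + s⁻¹ * lz (A z) := by
    intro z hz hD u hu
    have hmem : ((A z, Fhat ε f ξhat v z + u) : Z d n × ℝ) ∈ SS := by
      refine ⟨z, hz, ?_, hπR z⟩
      show Fz ε f ξhat v z < ((Fhat ε f ξhat v z + u : ℝ) : EReal)
      rw [Fz_eq_coe hD, EReal.coe_lt_coe_iff]
      linarith
    have h2 := hlle _ hmem
    rw [hldec, hlx] at h2
    have h3 := mul_le_mul_of_nonpos_left h2 (le_of_lt (inv_lt_zero.mpr hslt))
    have hss : s⁻¹ * s = 1 := inv_mul_cancel₀ hslt.ne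
    have e1 : s⁻¹ * (cb * s) = cb := by
      rw [mul_comm cb s, ← mul_assoc, hss, one_mul]
    have e2 : s⁻¹ * ((Fhat ε f ξhat v z + u) * s) = Fhat ε f ξhat v z + u := by
      rw [mul_comm _ s, ← mul_assoc, hss, one_mul]
    rw [e1, mul_add, e2] at h3
    linarith
  have hkey : ∀ z : Z d n, (∀ i, 0 ≤ z.2 i) → Dom f ξhat v z →
      cb ≤ Fhat ε f ξhat v z + s⁻¹ * lz (A z) := by
    intro z hz hD
    by_contra hcon
    push_neg at hcon
    have hu : 0 < (cb - (Fhat ε f ξhat v z + s⁻¹ * lz (A z))) / 2 := by linarith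
    have := hstep z hz hD _ hu
    linarith
  -- conclusion
  set Lfin : Z d n →L[ℝ] ℝ := s⁻¹ • lz with hLfin
  refine ⟨νof Lfin, ηof Lfin, fun z hz => ?_⟩
  by_cases hD : Dom f ξhat v z
  · rw [hFzbar, Fz_eq_coe hD, ← EReal.coe_add, EReal.coe_le_coe_iff, pen_of_repr]
    have h := hkey z hz hD
    have hps : Lfin (Amap Lap z) = s⁻¹ * lz (A z) := by
      simp [hLfin, hA]
    rw [hps]
    exact h
  · rw [Fz_eq_top hN hD, EReal.top_add_of_ne_bot (EReal.coe_ne_bot _)]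
    exact le_top

end DroAux

namespace DroAux

variable {d m n N : ℕ}

lemma pen_add (Lap : Matrix (Fin n) (Fin n) ℝ) (ν a : Fin n → ℝ) (η b : Fin n → Vec d)
    (z : Z d n) :
    pen Lap (ν + a) (η + b) z = pen Lap ν η z + pen Lap a b z := by
  unfold pen
  simp only [Pi.add_apply, add_mul, inner_add_left, Finset.sum_add_distrib]
  ring

/-- consensus point facts from hfin -/
lemma consensus_interior (hN : 0 < N) (ε : ℝ) (f : Vec d → Vec m → ℝ)
    (ξhat : Fin N → Vec m) (v : Fin N → Fin n)
    {q₀ : Vec d × ℝ}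
    (hq₀ : q₀ ∈ interior {p : Vec d × ℝ |
        0 ≤ p.2 ∧ ∃ r : ℝ, Jobj ε f ξhat p.1 p.2 = (r : EReal)}) :
    ((fun _ => q₀.1, fun _ => q₀.2) : Z d n) ∈ interior (Cset f ξhat v) := by
  set S₀ := {p : Vec d × ℝ | 0 ≤ p.2 ∧ ∃ r : ℝ, Jobj ε f ξhat p.1 p.2 = (r : EReal)} with hS₀
  set W : Set (Z d n) := ⋂ i : Fin n, (fun z : Z d n => (z.1 i, z.2 i)) ⁻¹' interior S₀ with hW
  have hWopen : IsOpen W := isOpen_iInter_of_finite fun i =>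
    (isOpen_interior).preimage (((continuous_apply i).comp continuous_fst).prodMk
      ((continuous_apply i).comp continuous_snd))
  have hWsub : W ⊆ Cset f ξhat v := by
    intro z hz
    simp only [hW, Set.mem_iInter, Set.mem_preimage] at hz
    have hz' : ∀ i, ((z.1 i, z.2 i) : Vec d × ℝ) ∈ S₀ := fun i => interior_subset (hz i)
    refine ⟨fun i => (hz' i).1, fun k => ?_⟩
    obtain ⟨r, hr⟩ := (hz' (v k)).2
    exact Jobj_finite_imp hN hr k
  have hz₀W : ((fun _ => q₀.1, fun _ => q₀.2) : Z d n) ∈ W := by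
    simp only [hW, Set.mem_iInter, Set.mem_preimage]
    intro i
    exact hq₀
  exact interior_maximal hWsub hWopen hz₀W

lemma consensus_feas (q₀ : Vec d × ℝ) (hq₀ : 0 ≤ q₀.2)
    (Lap : Matrix (Fin n) (Fin n) ℝ)
    (hLker : ∀ w : Fin n → ℝ, Lap.mulVec w = 0 ↔ ∃ c : ℝ, w = fun _ => c) :
    ((fun _ => q₀.1, fun _ => q₀.2) : Z d n) ∈ Feas (d := d) Lap := by
  have hrow : ∀ i, ∑ j, Lap i j = 0 := by
    have h1 : Lap.mulVec (fun _ => (1:ℝ)) = 0 := (hLker _).mpr ⟨1, rfl⟩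
    intro i
    have := congrFun h1 i
    simpa [Matrix.mulVec, dotProduct] using this
  refine ⟨fun _ => hq₀, (hLker _).mpr ⟨q₀.2, rfl⟩, fun i => ?_⟩
  show ∑ j : Fin n, Lap i j • q₀.1 = 0
  rw [← Finset.sum_smul, hrow, zero_smul]

/-- Part (i) core -/
lemma saddle_implies_opt (hN : 0 < N) (ε : ℝ) (f : Vec d → Vec m → ℝ)
    (ξhat : Fin N → Vec m) (v : Fin N → Fin n) (Lap : Matrix (Fin n) (Fin n) ℝ)
    {z₀ : Z d n} (hz₀C : z₀ ∈ Cset f ξhat v) (hz₀F : z₀ ∈ Feas (d := d) Lap)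
    (xv : Fin n → Vec d) (lv ν : Fin n → ℝ) (η : Fin n → Vec d)
    (hpos : ∀ i, 0 ≤ lv i)
    (hsad1 : ∀ (ν' : Fin n → ℝ) (η' : Fin n → Vec d),
      Lagr ε f ξhat v Lap xv lv ν' η' ≤ Lagr ε f ξhat v Lap xv lv ν η)
    (hsad2 : ∀ (xv' : Fin n → Vec d) (lv' : Fin n → ℝ), (∀ i, 0 ≤ lv' i) →
      Lagr ε f ξhat v Lap xv lv ν η ≤ Lagr ε f ξhat v Lap xv' lv' ν η) :
    ((xv, lv) : Z d n) ∈ Feas (d := d) Lap ∧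
      ∀ p ∈ Feas (d := d) Lap, Fobj ε f ξhat v xv lv ≤ Fobj ε f ξhat v p.1 p.2 := by
  set zb : Z d n := (xv, lv) with hzb
  -- finite value at zb
  have hup := hsad2 z₀.1 z₀.2 hz₀F.1
  have hnetop : Fz ε f ξhat v zb ≠ ⊤ := by
    intro h
    rw [show Lagr ε f ξhat v Lap xv lv ν η
        = Fz ε f ξhat v zb + ((pen Lap ν η zb : ℝ) : EReal) from rfl, h,
      EReal.top_add_of_ne_bot (EReal.coe_ne_bot _)] at hup
    rw [show Lagr ε f ξhat v Lap z₀.1 z₀.2 ν η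
        = Fz ε f ξhat v z₀ + ((pen Lap ν η z₀ : ℝ) : EReal) from rfl,
      Fz_eq_coe hz₀C.2, ← EReal.coe_add] at hup
    exact EReal.coe_ne_top _ (top_le_iff.mp hup)
  have hDom : Dom f ξhat v zb := Dom_of_lt_top hN hnetop
  have hFzb : Fz ε f ξhat v zb = ((Fhat ε f ξhat v zb : ℝ) : EReal) := Fz_eq_coe hDom
  -- penalty inequalities
  have hpen : ∀ (ν' : Fin n → ℝ) (η' : Fin n → Vec d),
      pen Lap ν' η' zb ≤ pen Lap ν η zb := by
    intro ν' η'
    have := hsad1 ν' η'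
    rw [show Lagr ε f ξhat v Lap xv lv ν' η'
        = Fz ε f ξhat v zb + ((pen Lap ν' η' zb : ℝ) : EReal) from rfl,
      show Lagr ε f ξhat v Lap xv lv ν η
        = Fz ε f ξhat v zb + ((pen Lap ν η zb : ℝ) : EReal) from rfl,
      hFzb, ← EReal.coe_add, ← EReal.coe_add, EReal.coe_le_coe_iff] at this
    linarith
  -- plug special multipliers
  have hkey := hpen (ν + Lap.mulVec lv) (η + fun i => ∑ j : Fin n, Lap i j • xv j)
  rw [pen_add] at hkey
  have hq : pen Lap (Lap.mulVec lv) (fun i => ∑ j : Fin n, Lap i j • xv j) zb ≤ 0 := by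
    linarith
  have hS1 : ∀ i : Fin n, (0:ℝ) ≤ Lap.mulVec lv i * Lap.mulVec lv i :=
    fun i => mul_self_nonneg _
  have hS2 : ∀ i : Fin n, (0:ℝ) ≤
      (inner ℝ ((fun i => ∑ j : Fin n, Lap i j • xv j) i) (∑ j : Fin n, Lap i j • xv j) : ℝ) :=
    fun i => real_inner_self_nonneg
  have hpen_expand : pen Lap (Lap.mulVec lv) (fun i => ∑ j : Fin n, Lap i j • xv j) zb
      = ∑ i, Lap.mulVec lv i * Lap.mulVec lv i
        + ∑ i, (inner ℝ (∑ j : Fin n, Lap i j • xv j) (∑ j : Fin n, Lap i j • xv j) : ℝ) := rfl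
  rw [hpen_expand] at hq
  have hsum1 : ∑ i, Lap.mulVec lv i * Lap.mulVec lv i = 0 := by
    have h1 : (0:ℝ) ≤ ∑ i, Lap.mulVec lv i * Lap.mulVec lv i :=
      Finset.sum_nonneg fun i _ => hS1 i
    have h2 : (0:ℝ) ≤ ∑ i, (inner ℝ (∑ j : Fin n, Lap i j • xv j)
        (∑ j : Fin n, Lap i j • xv j) : ℝ) :=
      Finset.sum_nonneg fun i _ => hS2 i
    linarith
  have hsum2 : ∑ i, (inner ℝ (∑ j : Fin n, Lap i j • xv j)
      (∑ j : Fin n, Lap i j • xv j) : ℝ) = 0 := by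
    have h1 : (0:ℝ) ≤ ∑ i, Lap.mulVec lv i * Lap.mulVec lv i :=
      Finset.sum_nonneg fun i _ => hS1 i
    have h2 : (0:ℝ) ≤ ∑ i, (inner ℝ (∑ j : Fin n, Lap i j • xv j)
        (∑ j : Fin n, Lap i j • xv j) : ℝ) :=
      Finset.sum_nonneg fun i _ => hS2 i
    linarith
  have hmul : ∀ i : Fin n, Lap.mulVec lv i = 0 := by
    intro i
    have := (Finset.sum_eq_zero_iff_of_nonneg (fun i _ => hS1 i)).mp hsum1 i
      (Finset.mem_univ i)
    exact mul_self_eq_zero.mp this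
  have hx : ∀ i : Fin n, ∑ j : Fin n, Lap i j • xv j = 0 := by
    intro i
    have := (Finset.sum_eq_zero_iff_of_nonneg (fun i _ => hS2 i)).mp hsum2 i
      (Finset.mem_univ i)
    exact inner_self_eq_zero.mp this
  have hfeas : ((xv, lv) : Z d n) ∈ Feas (d := d) Lap :=
    ⟨hpos, funext hmul, hx⟩
  refine ⟨hfeas, fun p hp => ?_⟩
  have := hsad2 p.1 p.2 hp.1
  rw [show Lagr ε f ξhat v Lap xv lv ν η
      = Fz ε f ξhat v zb + ((pen Lap ν η zb : ℝ) : EReal) from rfl,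
    show Lagr ε f ξhat v Lap p.1 p.2 ν η
      = Fz ε f ξhat v p + ((pen Lap ν η p : ℝ) : EReal) from rfl,
    pen_eq_zero_of_feas hfeas, pen_eq_zero_of_feas hp, EReal.coe_zero, add_zero,
    add_zero] at this
  exact this

end DroAux


/-- (i) saddle points of L give optimizers of the distributed problem;
(ii) optimizers of the distributed problem extend to saddle points of L. -/
theorem lagrangian_saddle_iff_distributed_optimizer
    {d m n N : ℕ} (hn : 0 < n) (hN : 0 < N)
    (f : Vec d → Vec m → ℝ) (ξhat : Fin N → Vec m) (ε : ℝ) (hε : 0 < ε)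
    (hf : ContDiff ℝ 1 (Function.uncurry f))
    (hconv : ∀ ξ : Vec m, ConvexOn ℝ Set.univ (fun x => f x ξ))
    (v : Fin N → Fin n) (hv : Function.Surjective v)
    (Lap : Matrix (Fin n) (Fin n) ℝ) (hLsym : Lap.IsSymm) (hLpsd : Lap.PosSemidef)
    (hLker : ∀ w : Fin n → ℝ, Lap.mulVec w = 0 ↔ ∃ c : ℝ, w = fun _ => c)
    (hfin : (interior {p : Vec d × ℝ |
        0 ≤ p.2 ∧ ∃ r : ℝ, Jobj ε f ξhat p.1 p.2 = (r : EReal)}).Nonempty)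
    (hopt : ∃ (xs : Vec d) (ls : ℝ), 0 ≤ ls ∧ ∀ x : Vec d, ∀ lam : ℝ, 0 ≤ lam →
      Jobj ε f ξhat xs ls ≤ Jobj ε f ξhat x lam) :
    (∀ (xv : Fin n → Vec d) (lv ν : Fin n → ℝ) (η : Fin n → Vec d),
      IsSaddleLagr ε f ξhat v Lap xv lv ν η →
        ((xv, lv) : (Fin n → Vec d) × (Fin n → ℝ)) ∈ Feas (d := d) Lap ∧
        ∀ p ∈ Feas (d := d) Lap,
          Fobj ε f ξhat v xv lv ≤ Fobj ε f ξhat v p.1 p.2) ∧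
    (∀ (xv : Fin n → Vec d) (lv : Fin n → ℝ),
      ((xv, lv) : (Fin n → Vec d) × (Fin n → ℝ)) ∈ Feas (d := d) Lap →
      (∀ p ∈ Feas (d := d) Lap,
        Fobj ε f ξhat v xv lv ≤ Fobj ε f ξhat v p.1 p.2) →
      ∃ (ν : Fin n → ℝ) (η : Fin n → Vec d),
        IsSaddleLagr ε f ξhat v Lap xv lv ν η) := by
  classical
  obtain ⟨q₀, hq₀⟩ := hfin
  have hq₀S : q₀ ∈ {p : Vec d × ℝ |
      0 ≤ p.2 ∧ ∃ r : ℝ, Jobj ε f ξhat p.1 p.2 = (r : EReal)} :=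
    interior_subset hq₀
  have hz₀C : ((fun _ => q₀.1, fun _ => q₀.2) : DroAux.Z d n)
      ∈ interior (DroAux.Cset f ξhat v) := DroAux.consensus_interior hN ε f ξhat v hq₀
  have hz₀F : ((fun _ => q₀.1, fun _ => q₀.2) : DroAux.Z d n) ∈ Feas (d := d) Lap :=
    DroAux.consensus_feas q₀ hq₀S.1 Lap hLker
  constructor
  · rintro xv lv ν η ⟨hpos, hs1, hs2⟩
    exact DroAux.saddle_implies_opt hN ε f ξhat v Lap (interior_subset hz₀C) hz₀F
      xv lv ν η hpos hs1 hs2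
  · intro xv lv hfeas hopt'
    obtain ⟨ν, η, hkey⟩ := DroAux.exists_multiplier (zbar := ((xv, lv) : DroAux.Z d n))
      hn hN ε f ξhat v Lap hconv hz₀C hz₀F hfeas (fun p hp => hopt' p hp)
    have e : ∀ (ν' : Fin n → ℝ) (η' : Fin n → Vec d),
        Lagr ε f ξhat v Lap xv lv ν' η' = Fobj ε f ξhat v xv lv := by
      intro ν' η'
      rw [show Lagr ε f ξhat v Lap xv lv ν' η'
          = DroAux.Fz ε f ξhat v ((xv, lv) : DroAux.Z d n)
            + ((DroAux.pen Lap ν' η' ((xv, lv) : DroAux.Z d n) : ℝ) : EReal) from rfl,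
        DroAux.pen_eq_zero_of_feas hfeas, EReal.coe_zero, add_zero]
      rfl
    refine ⟨ν, η, hfeas.1, fun ν' η' => ?_, fun xv' lv' hpos' => ?_⟩
    · rw [e ν' η', e ν η]
    · rw [e ν η]
      exact hkey ((xv', lv') : DroAux.Z d n) hpos'


end
end

section
/- A point (x_v*, λ_v*, ν*, η*) is a saddle point of L over (ℝ^{nd} × ℝ_{≥0}ⁿ) × (ℝⁿ × ℝ^{nd}) if and only if it is a saddle point of L_aug over the same domain. -/
open scoped BigOperators RealInnerProductSpace
open Finset

noncomputable section

/-- A saddle point of the augmented Lagrangian L_aug over the same domain. -/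
def IsSaddleLagrAug {d m n N : ℕ} (ε : ℝ) (f : Vec d → Vec m → ℝ) (ξhat : Fin N → Vec m)
    (v : Fin N → Fin n) (Lap : Matrix (Fin n) (Fin n) ℝ)
    (xv : Fin n → Vec d) (lv : Fin n → ℝ) (ν : Fin n → ℝ) (η : Fin n → Vec d) : Prop :=
  (∀ i, 0 ≤ lv i) ∧
  (∀ (ν' : Fin n → ℝ) (η' : Fin n → Vec d),
    LagrAug ε f ξhat v Lap xv lv ν' η' ≤ LagrAug ε f ξhat v Lap xv lv ν η) ∧
  (∀ (xv' : Fin n → Vec d) (lv' : Fin n → ℝ), (∀ i, 0 ≤ lv' i) →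
    LagrAug ε f ξhat v Lap xv lv ν η ≤ LagrAug ε f ξhat v Lap xv' lv' ν η)

/-! ### Auxiliary definitions and lemmas for the proof -/

/-- The (real-valued) linear multiplier term of the Lagrangian. -/
def LinT {d n : ℕ} (Lap : Matrix (Fin n) (Fin n) ℝ) (xv : Fin n → Vec d)
    (lv ν : Fin n → ℝ) (η : Fin n → Vec d) : ℝ :=
  ∑ i, ν i * Lap.mulVec lv i + ∑ i, (inner ℝ (η i) (∑ j : Fin n, Lap i j • xv j) : ℝ)

/-- The (real-valued) augmentation term. -/
def QT {d n : ℕ} (Lap : Matrix (Fin n) (Fin n) ℝ) (xv : Fin n → Vec d)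
    (lv : Fin n → ℝ) : ℝ :=
  (1 / 2 : ℝ) * ∑ i, (inner ℝ (xv i) (∑ j : Fin n, Lap i j • xv j) : ℝ)
    + (1 / 2 : ℝ) * ∑ i, lv i * Lap.mulVec lv i

lemma ecoe_sum {ι : Type*} (s : Finset ι) (g : ι → ℝ) :
    ((∑ i ∈ s, g i : ℝ) : EReal) = ∑ i ∈ s, ((g i : ℝ) : EReal) :=
  map_sum (⟨⟨Real.toEReal, EReal.coe_zero⟩, EReal.coe_add⟩ : ℝ →+ EReal) g s

lemma add_coe_top_iff (a : EReal) (r : ℝ) : a + (r : EReal) = ⊤ ↔ a = ⊤ := by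
  induction a using EReal.rec with
  | bot => simp
  | coe x =>
    exact iff_of_false (by rw [← EReal.coe_add]; exact EReal.coe_ne_top _) (EReal.coe_ne_top _)
  | top => simp [EReal.top_add_coe]

/-- Representation of `Fobj`: it is either `⊤` or a real number. -/
lemma Fobj_repr {d m n N : ℕ} (hN : 0 < N) (ε : ℝ) (f : Vec d → Vec m → ℝ)
    (ξhat : Fin N → Vec m) (v : Fin N → Fin n) (xv : Fin n → Vec d) (lv : Fin n → ℝ) :
    Fobj ε f ξhat v xv lv = ⊤ ∨
      ∃ s : Fin N → ℝ,
        (∀ k, (⨆ ξ : Vec m, ((gk f ξhat k (xv (v k)) (lv (v k)) ξ : ℝ) : EReal)) = (s k : EReal))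
        ∧ Fobj ε f ξhat v xv lv
            = ((ε ^ 2 / (n : ℝ) * ∑ i, lv i + (1 / (N : ℝ)) * ∑ k, s k : ℝ) : EReal) := by
  set S : Fin N → EReal :=
    fun k => ⨆ ξ : Vec m, ((gk f ξhat k (xv (v k)) (lv (v k)) ξ : ℝ) : EReal) with hS
  have hbot : ∀ k, S k ≠ ⊥ := by
    intro k h
    have : ((gk f ξhat k (xv (v k)) (lv (v k)) 0 : ℝ) : EReal) ≤ S k :=
      le_iSup (fun ξ : Vec m => ((gk f ξhat k (xv (v k)) (lv (v k)) ξ : ℝ) : EReal)) 0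
    rw [h] at this
    exact (EReal.bot_lt_coe _).not_ge this
  by_cases htop : ∀ k, S k ≠ ⊤
  · right
    refine ⟨fun k => (S k).toReal, fun k => (EReal.coe_toReal (htop k) (hbot k)).symm, ?_⟩
    have hsum : (∑ k : Fin N, S k) = ((∑ k, (S k).toReal : ℝ) : EReal) := by
      rw [ecoe_sum]
      exact Finset.sum_congr rfl fun k _ => (EReal.coe_toReal (htop k) (hbot k)).symm
    show ((ε ^ 2 / (n : ℝ) * ∑ i, lv i : ℝ) : EReal) + ((1 / (N : ℝ) : ℝ) : EReal) * ∑ k, S k = _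
    rw [hsum, ← EReal.coe_mul, ← EReal.coe_add]
  · left
    push_neg at htop
    obtain ⟨k0, hk0⟩ := htop
    have hrest : (∑ k ∈ Finset.univ.erase k0, S k) ≠ ⊥ := by
      have hle : ((∑ k ∈ Finset.univ.erase k0,
          gk f ξhat k (xv (v k)) (lv (v k)) 0 : ℝ) : EReal) ≤ ∑ k ∈ Finset.univ.erase k0, S k := by
        rw [ecoe_sum]
        exact Finset.sum_le_sum fun k _ =>
          le_iSup (fun ξ : Vec m => ((gk f ξhat k (xv (v k)) (lv (v k)) ξ : ℝ) : EReal)) 0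
      intro h; rw [h] at hle
      exact (EReal.bot_lt_coe _).not_ge hle
    have hsum : (∑ k : Fin N, S k) = ⊤ := by
      rw [← Finset.add_sum_erase _ S (Finset.mem_univ k0), hk0]
      exact EReal.top_add_of_ne_bot hrest
    show ((ε ^ 2 / (n : ℝ) * ∑ i, lv i : ℝ) : EReal) + ((1 / (N : ℝ) : ℝ) : EReal) * ∑ k, S k = ⊤
    rw [hsum, EReal.coe_mul_top_of_pos (by positivity), EReal.coe_add_top]

section Quad
variable {d n : ℕ} (Lap : Matrix (Fin n) (Fin n) ℝ)

lemma Qx_expand (a b : Fin n → Vec d) :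
    ∑ i, (inner ℝ (a i) (∑ j : Fin n, Lap i j • b j) : ℝ)
      = ∑ i, ∑ j, Lap i j * (inner ℝ (a i) (b j) : ℝ) := by
  refine Finset.sum_congr rfl fun i _ => ?_
  rw [inner_sum]
  exact Finset.sum_congr rfl fun j _ => real_inner_smul_right _ _ _

lemma Qx_symm (hLsym : Lap.IsSymm) (a b : Fin n → Vec d) :
    ∑ i, (inner ℝ (a i) (∑ j : Fin n, Lap i j • b j) : ℝ)
      = ∑ i, (inner ℝ (b i) (∑ j : Fin n, Lap i j • a j) : ℝ) := by
  rw [Qx_expand, Qx_expand, Finset.sum_comm]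
  refine Finset.sum_congr rfl fun i _ => Finset.sum_congr rfl fun j _ => ?_
  rw [hLsym.apply, real_inner_comm]

lemma Qx_nonneg (hLpsd : Lap.PosSemidef) (a : Fin n → Vec d) :
    0 ≤ ∑ i, (inner ℝ (a i) (∑ j : Fin n, Lap i j • a j) : ℝ) := by
  rw [Qx_expand]
  have e : ∀ i j : Fin n, Lap i j * (inner ℝ (a i) (a j) : ℝ)
      = ∑ c : Fin d, Lap i j * (a i c * a j c) := by
    intro i j
    rw [PiLp.inner_apply, Finset.mul_sum]
    exact Finset.sum_congr rfl fun c _ => by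
      simp [RCLike.inner_apply, conj_trivial]; left; ring
  simp_rw [e]
  have swap : (∑ i : Fin n, ∑ j : Fin n, ∑ c : Fin d, Lap i j * (a i c * a j c))
      = ∑ c : Fin d, ∑ i : Fin n, ∑ j : Fin n, Lap i j * (a i c * a j c) := by
    rw [Finset.sum_congr rfl fun (i : Fin n) _ =>
      (Finset.sum_comm : (∑ j : Fin n, ∑ c : Fin d, Lap i j * (a i c * a j c)) = _)]
    exact Finset.sum_comm
  rw [swap]
  refine Finset.sum_nonneg fun c _ => ?_
  have h := hLpsd.dotProduct_mulVec_nonneg (fun i => a i c)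
  simp only [dotProduct, Matrix.mulVec, Pi.star_apply, star_trivial,
    Finset.mul_sum] at h
  refine le_of_le_of_eq h
    (Finset.sum_congr rfl fun i _ => Finset.sum_congr rfl fun j _ => by ring)

lemma Qlam_symm (hLsym : Lap.IsSymm) (a b : Fin n → ℝ) :
    ∑ i, a i * Lap.mulVec b i = ∑ i, b i * Lap.mulVec a i := by
  simp only [Matrix.mulVec, dotProduct, Finset.mul_sum]
  rw [Finset.sum_comm]
  exact Finset.sum_congr rfl fun i _ => Finset.sum_congr rfl fun j _ => by
    rw [hLsym.apply]; ring

lemma Qlam_nonneg (hLpsd : Lap.PosSemidef) (a : Fin n → ℝ) :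
    0 ≤ ∑ i, a i * Lap.mulVec a i := by
  have h := hLpsd.dotProduct_mulVec_nonneg a
  simpa [dotProduct] using h

lemma QT_nonneg {d : ℕ} (hLpsd : Lap.PosSemidef) (xv : Fin n → Vec d) (lv : Fin n → ℝ) :
    0 ≤ QT Lap xv lv := by
  have h1 := Qx_nonneg Lap hLpsd xv
  have h2 := Qlam_nonneg Lap hLpsd lv
  unfold QT
  linarith

lemma mulVec_comb (t : ℝ) (a b : Fin n → ℝ) :
    Lap.mulVec (fun i => (1 - t) * a i + t * b i)
      = fun i => (1 - t) * Lap.mulVec a i + t * Lap.mulVec b i := by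
  funext i
  simp only [Matrix.mulVec, dotProduct, Finset.mul_sum, ← Finset.sum_add_distrib]
  exact Finset.sum_congr rfl fun j _ => by ring

lemma rvec_comb (t : ℝ) (a b : Fin n → Vec d) (i : Fin n) :
    (∑ j : Fin n, Lap i j • ((1 - t) • a j + t • b j))
      = (1 - t) • (∑ j : Fin n, Lap i j • a j) + t • (∑ j : Fin n, Lap i j • b j) := by
  rw [Finset.smul_sum, Finset.smul_sum, ← Finset.sum_add_distrib]
  exact Finset.sum_congr rfl fun j _ => by
    rw [smul_add, smul_comm (Lap i j) (1 - t), smul_comm (Lap i j) t]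

variable {Lap}

lemma LinT_comb (hLsym : Lap.IsSymm) (xv xv' : Fin n → Vec d) (lv lv' ν : Fin n → ℝ)
    (η : Fin n → Vec d) (t : ℝ)
    (hker : Lap.mulVec lv = 0) (hr : ∀ i : Fin n, (∑ j : Fin n, Lap i j • xv j) = 0) :
    LinT Lap (fun i => (1 - t) • xv i + t • xv' i) (fun i => (1 - t) * lv i + t * lv' i) ν η
      = t * LinT Lap xv' lv' ν η := by
  have hlam : Lap.mulVec (fun i => (1 - t) * lv i + t * lv' i)
      = fun i => t * Lap.mulVec lv' i := by
    rw [mulVec_comb, hker]; funext i; simp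
  have hx : ∀ i : Fin n, (∑ j : Fin n, Lap i j • ((1 - t) • xv j + t • xv' j))
      = t • (∑ j : Fin n, Lap i j • xv' j) := by
    intro i; rw [rvec_comb, hr i, smul_zero, zero_add]
  unfold LinT
  simp only [hlam]
  have e : (∑ i, (inner ℝ (η i) (∑ j : Fin n, Lap i j • ((1 - t) • xv j + t • xv' j)) : ℝ))
      = ∑ i, t * (inner ℝ (η i) (∑ j : Fin n, Lap i j • xv' j) : ℝ) :=
    Finset.sum_congr rfl fun i _ => by rw [hx i, real_inner_smul_right]
  rw [e]
  rw [mul_add, Finset.mul_sum, Finset.mul_sum]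
  congr 1
  exact Finset.sum_congr rfl fun i _ => by ring

lemma QT_comb (hLsym : Lap.IsSymm) (xv xv' : Fin n → Vec d) (lv lv' : Fin n → ℝ) (t : ℝ)
    (hker : Lap.mulVec lv = 0) (hr : ∀ i : Fin n, (∑ j : Fin n, Lap i j • xv j) = 0) :
    QT Lap (fun i => (1 - t) • xv i + t • xv' i) (fun i => (1 - t) * lv i + t * lv' i)
      = t ^ 2 * QT Lap xv' lv' := by
  have hlam : Lap.mulVec (fun i => (1 - t) * lv i + t * lv' i)
      = fun i => t * Lap.mulVec lv' i := by
    rw [mulVec_comb, hker]; funext i; simp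
  have hx : ∀ i : Fin n, (∑ j : Fin n, Lap i j • ((1 - t) • xv j + t • xv' j))
      = t • (∑ j : Fin n, Lap i j • xv' j) := by
    intro i; rw [rvec_comb, hr i, smul_zero, zero_add]
  have hxpart : (∑ i, (inner ℝ ((1 - t) • xv i + t • xv' i)
        (∑ j : Fin n, Lap i j • ((1 - t) • xv j + t • xv' j)) : ℝ))
      = t ^ 2 * ∑ i, (inner ℝ (xv' i) (∑ j : Fin n, Lap i j • xv' j) : ℝ) := by
    calc (∑ i, (inner ℝ ((1 - t) • xv i + t • xv' i)
          (∑ j : Fin n, Lap i j • ((1 - t) • xv j + t • xv' j)) : ℝ))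
        = t * ∑ i, (inner ℝ ((1 - t) • xv i + t • xv' i) (∑ j : Fin n, Lap i j • xv' j) : ℝ) := by
          rw [Finset.mul_sum]
          exact Finset.sum_congr rfl fun i _ => by rw [hx i, real_inner_smul_right]
      _ = t * ∑ i, (inner ℝ (xv' i)
            (∑ j : Fin n, Lap i j • ((1 - t) • xv j + t • xv' j)) : ℝ) := by
          rw [Qx_symm Lap hLsym]
      _ = t * (t * ∑ i, (inner ℝ (xv' i) (∑ j : Fin n, Lap i j • xv' j) : ℝ)) := by
          congr 1
          rw [Finset.mul_sum]
          exact Finset.sum_congr rfl fun i _ => by rw [hx i, real_inner_smul_right]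
      _ = t ^ 2 * ∑ i, (inner ℝ (xv' i) (∑ j : Fin n, Lap i j • xv' j) : ℝ) := by ring
  have hlampart : (∑ i, ((1 - t) * lv i + t * lv' i)
        * Lap.mulVec (fun i => (1 - t) * lv i + t * lv' i) i)
      = t ^ 2 * ∑ i, lv' i * Lap.mulVec lv' i := by
    calc (∑ i, ((1 - t) * lv i + t * lv' i)
          * Lap.mulVec (fun i => (1 - t) * lv i + t * lv' i) i)
        = t * ∑ i, ((1 - t) * lv i + t * lv' i) * Lap.mulVec lv' i := by
          simp only [hlam]
          rw [Finset.mul_sum]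
          exact Finset.sum_congr rfl fun i _ => by ring
      _ = t * ∑ i, lv' i * Lap.mulVec (fun i => (1 - t) * lv i + t * lv' i) i := by
          rw [Qlam_symm Lap hLsym]
      _ = t * (t * ∑ i, lv' i * Lap.mulVec lv' i) := by
          congr 1
          simp only [hlam]
          rw [Finset.mul_sum]
          exact Finset.sum_congr rfl fun i _ => by ring
      _ = t ^ 2 * ∑ i, lv' i * Lap.mulVec lv' i := by ring
  unfold QT
  rw [hxpart, hlampart]
  ring

lemma lin_max {d : ℕ} (Lap : Matrix (Fin n) (Fin n) ℝ) (xv : Fin n → Vec d)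
    (lv ν : Fin n → ℝ) (η : Fin n → Vec d)
    (h : ∀ (ν' : Fin n → ℝ) (η' : Fin n → Vec d),
      LinT Lap xv lv ν' η' ≤ LinT Lap xv lv ν η) :
    Lap.mulVec lv = 0 ∧ ∀ i : Fin n, (∑ j : Fin n, Lap i j • xv j) = 0 := by
  have key := h (fun i => ν i + Lap.mulVec lv i)
    (fun i => η i + ∑ j : Fin n, Lap i j • xv j)
  unfold LinT at key
  have e1 : ∑ i, (ν i + Lap.mulVec lv i) * Lap.mulVec lv i
      = ∑ i, ν i * Lap.mulVec lv i + ∑ i, (Lap.mulVec lv i) ^ 2 := by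
    rw [← Finset.sum_add_distrib]
    exact Finset.sum_congr rfl fun i _ => by ring
  have e2 : ∑ i, (inner ℝ (η i + ∑ j : Fin n, Lap i j • xv j) (∑ j : Fin n, Lap i j • xv j) : ℝ)
      = ∑ i, (inner ℝ (η i) (∑ j : Fin n, Lap i j • xv j) : ℝ)
          + ∑ i, ‖∑ j : Fin n, Lap i j • xv j‖ ^ 2 := by
    rw [← Finset.sum_add_distrib]
    refine Finset.sum_congr rfl fun i _ => ?_
    rw [inner_add_left, real_inner_self_eq_norm_sq]
  rw [e1, e2] at key
  have hA : (0:ℝ) ≤ ∑ i, (Lap.mulVec lv i) ^ 2 :=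
    Finset.sum_nonneg fun i _ => sq_nonneg _
  have hB : (0:ℝ) ≤ ∑ i, ‖∑ j : Fin n, Lap i j • xv j‖ ^ 2 :=
    Finset.sum_nonneg fun i _ => sq_nonneg _
  have hA0 : ∑ i, (Lap.mulVec lv i) ^ 2 = 0 := le_antisymm (by linarith) hA
  have hB0 : ∑ i, ‖∑ j : Fin n, Lap i j • xv j‖ ^ 2 = 0 := le_antisymm (by linarith) hB
  constructor
  · funext i
    have := (Finset.sum_eq_zero_iff_of_nonneg fun i _ => sq_nonneg (Lap.mulVec lv i)).1 hA0
      i (Finset.mem_univ i)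
    simpa using sq_eq_zero_iff.1 this
  · intro i
    have := (Finset.sum_eq_zero_iff_of_nonneg
      fun i _ => sq_nonneg ‖∑ j : Fin n, Lap i j • xv j‖).1 hB0 i (Finset.mem_univ i)
    exact norm_eq_zero.1 (sq_eq_zero_iff.1 this)

end Quad

lemma le_small (a b C : ℝ) (hC : 0 ≤ C) (h : ∀ t : ℝ, 0 < t → t ≤ 1 → a ≤ b + t * C) :
    a ≤ b := by
  refine le_of_forall_pos_le_add fun e he => ?_
  have ht : (0:ℝ) < min 1 (e / (C + 1)) := lt_min one_pos (div_pos he (by linarith))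
  refine (h _ ht (min_le_left _ _)).trans ?_
  have h2 : min 1 (e / (C + 1)) * C ≤ (e / (C + 1)) * (C + 1) :=
    mul_le_mul (min_le_right _ _) (by linarith) hC (by positivity)
  rw [div_mul_cancel₀ _ (by linarith : C + 1 ≠ 0)] at h2
  linarith

lemma Fobj_conv {d m n N : ℕ} (ε : ℝ) (f : Vec d → Vec m → ℝ) (ξhat : Fin N → Vec m)
    (hconv : ∀ ξ : Vec m, ConvexOn ℝ Set.univ (fun x => f x ξ))
    (v : Fin N → Fin n) (xv xv' : Fin n → Vec d) (lv lv' : Fin n → ℝ)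
    (t : ℝ) (ht0 : 0 ≤ t) (ht1 : t ≤ 1) (s s' : Fin N → ℝ)
    (hs : ∀ k, (⨆ ξ : Vec m, ((gk f ξhat k (xv (v k)) (lv (v k)) ξ : ℝ) : EReal)) = (s k : EReal))
    (hs' : ∀ k, (⨆ ξ : Vec m,
      ((gk f ξhat k (xv' (v k)) (lv' (v k)) ξ : ℝ) : EReal)) = (s' k : EReal)) :
    Fobj ε f ξhat v (fun i => (1 - t) • xv i + t • xv' i) (fun i => (1 - t) * lv i + t * lv' i)
      ≤ (((1 - t) * (ε ^ 2 / (n : ℝ) * ∑ i, lv i + (1 / (N : ℝ)) * ∑ k, s k)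
          + t * (ε ^ 2 / (n : ℝ) * ∑ i, lv' i + (1 / (N : ℝ)) * ∑ k, s' k) : ℝ) : EReal) := by
  have hsup : ∀ k : Fin N,
      (⨆ ξ : Vec m, ((gk f ξhat k ((1 - t) • xv (v k) + t • xv' (v k))
          ((1 - t) * lv (v k) + t * lv' (v k)) ξ : ℝ) : EReal))
        ≤ (((1 - t) * s k + t * s' k : ℝ) : EReal) := by
    intro k
    refine iSup_le fun ξ => ?_
    have hg1 : gk f ξhat k (xv (v k)) (lv (v k)) ξ ≤ s k := by
      refine EReal.coe_le_coe_iff.1 ?_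
      exact le_of_le_of_eq
        (le_iSup (fun ξ : Vec m => ((gk f ξhat k (xv (v k)) (lv (v k)) ξ : ℝ) : EReal)) ξ) (hs k)
    have hg2 : gk f ξhat k (xv' (v k)) (lv' (v k)) ξ ≤ s' k := by
      refine EReal.coe_le_coe_iff.1 ?_
      exact le_of_le_of_eq
        (le_iSup (fun ξ : Vec m => ((gk f ξhat k (xv' (v k)) (lv' (v k)) ξ : ℝ) : EReal)) ξ)
        (hs' k)
    refine EReal.coe_le_coe_iff.2 ?_
    have hf : f ((1 - t) • xv (v k) + t • xv' (v k)) ξ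
        ≤ (1 - t) * f (xv (v k)) ξ + t * f (xv' (v k)) ξ :=
      (hconv ξ).2 (Set.mem_univ _) (Set.mem_univ _) (by linarith) ht0 (by ring)
    have e : ((1 - t) * lv (v k) + t * lv' (v k)) * ‖ξ - ξhat k‖ ^ 2
        = (1 - t) * (lv (v k) * ‖ξ - ξhat k‖ ^ 2) + t * (lv' (v k) * ‖ξ - ξhat k‖ ^ 2) := by ring
    have h1 : (1 - t) * gk f ξhat k (xv (v k)) (lv (v k)) ξ ≤ (1 - t) * s k :=
      mul_le_mul_of_nonneg_left hg1 (by linarith)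
    have h2 : t * gk f ξhat k (xv' (v k)) (lv' (v k)) ξ ≤ t * s' k :=
      mul_le_mul_of_nonneg_left hg2 ht0
    simp only [gk] at h1 h2 ⊢
    rw [e]
    nlinarith [hf]
  unfold Fobj
  have hsum : (∑ k : Fin N, ⨆ ξ : Vec m,
        ((gk f ξhat k ((fun i => (1 - t) • xv i + t • xv' i) (v k))
          ((fun i => (1 - t) * lv i + t * lv' i) (v k)) ξ : ℝ) : EReal))
      ≤ ((∑ k : Fin N, ((1 - t) * s k + t * s' k) : ℝ) : EReal) := by
    rw [ecoe_sum]
    exact Finset.sum_le_sum fun k _ => hsup k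
  calc ((ε ^ 2 / (n : ℝ) * ∑ i, ((1 - t) * lv i + t * lv' i) : ℝ) : EReal)
        + ((1 / (N : ℝ) : ℝ) : EReal) * ∑ k : Fin N, ⨆ ξ : Vec m,
            ((gk f ξhat k ((fun i => (1 - t) • xv i + t • xv' i) (v k))
              ((fun i => (1 - t) * lv i + t * lv' i) (v k)) ξ : ℝ) : EReal)
      ≤ ((ε ^ 2 / (n : ℝ) * ∑ i, ((1 - t) * lv i + t * lv' i) : ℝ) : EReal)
        + ((1 / (N : ℝ) : ℝ) : EReal)
            * ((∑ k : Fin N, ((1 - t) * s k + t * s' k) : ℝ) : EReal) := by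
        exact add_le_add_right
          (mul_le_mul_of_nonneg_left hsum (EReal.coe_nonneg.2 (by positivity))) _
    _ = (((1 - t) * (ε ^ 2 / (n : ℝ) * ∑ i, lv i + (1 / (N : ℝ)) * ∑ k, s k)
          + t * (ε ^ 2 / (n : ℝ) * ∑ i, lv' i + (1 / (N : ℝ)) * ∑ k, s' k) : ℝ) : EReal) := by
        rw [← EReal.coe_mul, ← EReal.coe_add]
        norm_cast
        rw [Finset.sum_add_distrib, Finset.sum_add_distrib, ← Finset.mul_sum, ← Finset.mul_sum,
          ← Finset.mul_sum, ← Finset.mul_sum]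
        ring


/-- (x_v*, λ_v*, ν*, η*) is a saddle point of L over
(ℝ^{nd} × ℝ_{≥0}ⁿ) × (ℝⁿ × ℝ^{nd}) iff it is a saddle point of L_aug over the same
domain. -/
theorem saddle_L_iff_saddle_Laug
    {d m n N : ℕ} (hn : 0 < n) (hN : 0 < N)
    (f : Vec d → Vec m → ℝ) (ξhat : Fin N → Vec m) (ε : ℝ) (hε : 0 < ε)
    (hf : ContDiff ℝ 1 (Function.uncurry f))
    (hconv : ∀ ξ : Vec m, ConvexOn ℝ Set.univ (fun x => f x ξ))
    (v : Fin N → Fin n) (hv : Function.Surjective v)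
    (Lap : Matrix (Fin n) (Fin n) ℝ) (hLsym : Lap.IsSymm) (hLpsd : Lap.PosSemidef)
    (hLker : ∀ w : Fin n → ℝ, Lap.mulVec w = 0 ↔ ∃ c : ℝ, w = fun _ => c)
    (xv : Fin n → Vec d) (lv ν : Fin n → ℝ) (η : Fin n → Vec d) :
    IsSaddleLagr ε f ξhat v Lap xv lv ν η ↔
      IsSaddleLagrAug ε f ξhat v Lap xv lv ν η := by
  have hLagrE : ∀ (xv' : Fin n → Vec d) (lv' ν' : Fin n → ℝ) (η' : Fin n → Vec d),
      Lagr ε f ξhat v Lap xv' lv' ν' η'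
        = Fobj ε f ξhat v xv' lv' + ((LinT Lap xv' lv' ν' η' : ℝ) : EReal) :=
    fun _ _ _ _ => rfl
  have hLagrAugE : ∀ (xv' : Fin n → Vec d) (lv' ν' : Fin n → ℝ) (η' : Fin n → Vec d),
      LagrAug ε f ξhat v Lap xv' lv' ν' η'
        = Lagr ε f ξhat v Lap xv' lv' ν' η' + ((QT Lap xv' lv' : ℝ) : EReal) :=
    fun _ _ _ _ => rfl
  have hLagrTop : ∀ (xv' : Fin n → Vec d) (lv' ν' : Fin n → ℝ) (η' : Fin n → Vec d),
      (Lagr ε f ξhat v Lap xv' lv' ν' η' = ⊤ ↔ Fobj ε f ξhat v xv' lv' = ⊤) := by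
    intro xv' lv' ν' η'
    rw [hLagrE]; exact add_coe_top_iff _ _
  have hLagrAugTop : ∀ (xv' : Fin n → Vec d) (lv' ν' : Fin n → ℝ) (η' : Fin n → Vec d),
      (LagrAug ε f ξhat v Lap xv' lv' ν' η' = ⊤ ↔ Fobj ε f ξhat v xv' lv' = ⊤) := by
    intro xv' lv' ν' η'
    rw [hLagrAugE]; exact (add_coe_top_iff _ _).trans (hLagrTop xv' lv' ν' η')
  rcases Fobj_repr hN ε f ξhat v xv lv with htop | ⟨s, hs, hF⟩
  · -- degenerate case: Fobj(x*, λ*) = ⊤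
    have hLt : ∀ (ν' : Fin n → ℝ) (η' : Fin n → Vec d),
        Lagr ε f ξhat v Lap xv lv ν' η' = ⊤ := fun ν' η' => (hLagrTop xv lv ν' η').2 htop
    have hLAt : ∀ (ν' : Fin n → ℝ) (η' : Fin n → Vec d),
        LagrAug ε f ξhat v Lap xv lv ν' η' = ⊤ := fun ν' η' => (hLagrAugTop xv lv ν' η').2 htop
    constructor
    · rintro ⟨h1, h2, h3⟩
      refine ⟨h1, fun ν' η' => ?_, fun xv' lv' hlv' => ?_⟩
      · rw [hLAt, hLAt]
      · have h4 := h3 xv' lv' hlv'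
        rw [hLt] at h4
        have hfx : Fobj ε f ξhat v xv' lv' = ⊤ := (hLagrTop xv' lv' ν η).1 (top_le_iff.1 h4)
        rw [hLAt, (hLagrAugTop xv' lv' ν η).2 hfx]
    · rintro ⟨h1, h2, h3⟩
      refine ⟨h1, fun ν' η' => ?_, fun xv' lv' hlv' => ?_⟩
      · rw [hLt, hLt]
      · have h4 := h3 xv' lv' hlv'
        rw [hLAt] at h4
        have hfx : Fobj ε f ξhat v xv' lv' = ⊤ := (hLagrAugTop xv' lv' ν η).1 (top_le_iff.1 h4)
        rw [hLt, (hLagrTop xv' lv' ν η).2 hfx]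
  · -- finite case: Fobj(x*, λ*) = c ∈ ℝ
    set c : ℝ := ε ^ 2 / (n : ℝ) * ∑ i, lv i + (1 / (N : ℝ)) * ∑ k, s k with hc
    have hLagrC : ∀ (ν' : Fin n → ℝ) (η' : Fin n → Vec d),
        Lagr ε f ξhat v Lap xv lv ν' η' = ((c + LinT Lap xv lv ν' η' : ℝ) : EReal) := by
      intro ν' η'; rw [hLagrE, hF, ← EReal.coe_add]
    have hLagrAugC : ∀ (ν' : Fin n → ℝ) (η' : Fin n → Vec d),
        LagrAug ε f ξhat v Lap xv lv ν' η'
          = ((c + LinT Lap xv lv ν' η' + QT Lap xv lv : ℝ) : EReal) := by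
      intro ν' η'; rw [hLagrAugE, hLagrC, ← EReal.coe_add]
    constructor
    · rintro ⟨h1, h2, h3⟩
      have hlin : ∀ (ν' : Fin n → ℝ) (η' : Fin n → Vec d),
          LinT Lap xv lv ν' η' ≤ LinT Lap xv lv ν η := by
        intro ν' η'
        have h4 := h2 ν' η'
        rw [hLagrC, hLagrC] at h4
        have h5 := EReal.coe_le_coe_iff.1 h4
        linarith
      obtain ⟨hker, hr⟩ := lin_max Lap xv lv ν η hlin
      have hQ0 : QT Lap xv lv = 0 := by
        unfold QT
        rw [Finset.sum_eq_zero (fun i _ => by rw [hr i, inner_zero_right]),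
          Finset.sum_eq_zero (fun (i : Fin n) _ => by rw [hker]; simp)]
        ring
      refine ⟨h1, fun ν' η' => ?_, fun xv' lv' hlv' => ?_⟩
      · rw [hLagrAugE, hLagrAugE]
        exact add_le_add_left (h2 ν' η') _
      · rw [hLagrAugE, hLagrAugE, hQ0, EReal.coe_zero, add_zero]
        refine (h3 xv' lv' hlv').trans ?_
        exact le_add_of_nonneg_right (EReal.coe_nonneg.2 (QT_nonneg Lap hLpsd xv' lv'))
    · rintro ⟨h1, h2, h3⟩
      have hlin : ∀ (ν' : Fin n → ℝ) (η' : Fin n → Vec d),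
          LinT Lap xv lv ν' η' ≤ LinT Lap xv lv ν η := by
        intro ν' η'
        have h4 := h2 ν' η'
        rw [hLagrAugC, hLagrAugC] at h4
        have h5 := EReal.coe_le_coe_iff.1 h4
        linarith
      obtain ⟨hker, hr⟩ := lin_max Lap xv lv ν η hlin
      have hQ0 : QT Lap xv lv = 0 := by
        unfold QT
        rw [Finset.sum_eq_zero (fun i _ => by rw [hr i, inner_zero_right]),
          Finset.sum_eq_zero (fun (i : Fin n) _ => by rw [hker]; simp)]
        ring
      have hLin0 : LinT Lap xv lv ν η = 0 := by
        unfold LinT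
        rw [Finset.sum_eq_zero (fun (i : Fin n) _ => by rw [hker]; simp),
          Finset.sum_eq_zero (fun i _ => by rw [hr i, inner_zero_right])]
        ring
      refine ⟨h1, fun ν' η' => ?_, fun xv' lv' hlv' => ?_⟩
      · rw [hLagrC, hLagrC]
        exact EReal.coe_le_coe_iff.2 (by linarith [hlin ν' η'])
      · rcases Fobj_repr hN ε f ξhat v xv' lv' with htop' | ⟨s', hs', hF'⟩
        · rw [(hLagrTop xv' lv' ν η).2 htop']; exact le_top
        · have hQnn : 0 ≤ QT Lap xv' lv' := QT_nonneg Lap hLpsd xv' lv'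
          have hkey : ∀ t : ℝ, 0 < t → t ≤ 1 →
              c ≤ (ε ^ 2 / (n : ℝ) * ∑ i, lv' i + (1 / (N : ℝ)) * ∑ k, s' k
                + LinT Lap xv' lv' ν η) + t * QT Lap xv' lv' := by
            intro t ht0 ht1
            have hmono := h3 (fun i => (1 - t) • xv i + t • xv' i)
              (fun i => (1 - t) * lv i + t * lv' i)
              (fun i => add_nonneg (mul_nonneg (by linarith) (h1 i))
                (mul_nonneg ht0.le (hlv' i)))
            have hLHS : LagrAug ε f ξhat v Lap xv lv ν η = ((c : ℝ) : EReal) := by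
              rw [hLagrAugC, hLin0, hQ0]; norm_num
            have hLint := LinT_comb hLsym xv xv' lv lv' ν η t hker hr
            have hQt := QT_comb hLsym xv xv' lv lv' t hker hr
            have hFc := Fobj_conv ε f ξhat hconv v xv xv' lv lv' t ht0.le ht1 s s' hs hs'
            rw [← hc] at hFc
            have hRHS : LagrAug ε f ξhat v Lap
                  (fun i => (1 - t) • xv i + t • xv' i)
                  (fun i => (1 - t) * lv i + t * lv' i) ν η
                ≤ (((1 - t) * c
                      + t * (ε ^ 2 / (n : ℝ) * ∑ i, lv' i + (1 / (N : ℝ)) * ∑ k, s' k) : ℝ)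
                    : EReal)
                  + ((t * LinT Lap xv' lv' ν η + t ^ 2 * QT Lap xv' lv' : ℝ) : EReal) := by
              rw [hLagrAugE, hLagrE, hLint, hQt, add_assoc, ← EReal.coe_add]
              exact add_le_add_left hFc _
            rw [hLHS] at hmono
            have h6 := hmono.trans hRHS
            rw [← EReal.coe_add] at h6
            have hreal := EReal.coe_le_coe_iff.1 h6
            have h5 : t * c ≤ t * ((ε ^ 2 / (n : ℝ) * ∑ i, lv' i + (1 / (N : ℝ)) * ∑ k, s' k
                + LinT Lap xv' lv' ν η) + t * QT Lap xv' lv') := by nlinarith [hreal]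
            exact le_of_mul_le_mul_left h5 ht0
          have hfin := le_small _ _ _ hQnn hkey
          rw [hLagrC, hLagrE xv' lv' ν η, hF', ← EReal.coe_add]
          exact EReal.coe_le_coe_iff.2 (by linarith [hLin0])

end
end

section
/- Let f(x, ξ) := ξᵀQξ + xᵀRξ + ℓ(x), where Q ∈ ℝ^{m×m} is symmetric positive definite, R ∈ ℝ^{d×m}, and ℓ : ℝ^d → ℝ is convex and continuously differentiable, and let C := ℝ^{nd} × {λ_v ∈ ℝⁿ : λ^i ≥ λ_max(Q) for all i}, where λ_max(Q) is the largest eigenvalue of Q. Then L̃_aug is convex-concave on C × (ℝⁿ × ℝ^{nd} × ℝ^{mN}): for each fixed (ν, η, {ξ^k}), the map (x_v, λ_v) ↦ L̃_aug is convex on C, and for each fixed (x_v, λ_v) ∈ C, the map (ν, η, {ξ^k}) ↦ L̃_aug is concave on ℝⁿ × ℝ^{nd} × ℝ^{mN}. -/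
open scoped BigOperators RealInnerProductSpace
open Finset

noncomputable section

/-! ### Auxiliary lemmas -/

section Aux

open Matrix

lemma aff_convexOn' {E : Type*} [AddCommGroup E] [Module ℝ E] (g : E → ℝ)
    (h : ∀ (a b : ℝ), a + b = 1 → ∀ x y, g (a • x + b • y) = a * g x + b * g y) :
    ConvexOn ℝ (Set.univ : Set E) g :=
  ⟨convex_univ, fun x _ y _ a b _ _ hab => le_of_eq (h a b hab x y)⟩

lemma aff_concaveOn' {E : Type*} [AddCommGroup E] [Module ℝ E] (g : E → ℝ)
    (h : ∀ (a b : ℝ), a + b = 1 → ∀ x y, g (a • x + b • y) = a * g x + b * g y) :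
    ConcaveOn ℝ (Set.univ : Set E) g :=
  ⟨convex_univ, fun x _ y _ a b _ _ hab => ge_of_eq (h a b hab x y)⟩

lemma quad_convexOn' {E : Type*} [AddCommGroup E] [Module ℝ E] (B : E → E → ℝ)
    (addl : ∀ x y z, B (x + y) z = B x z + B y z)
    (smull : ∀ (c : ℝ) (x y : E), B (c • x) y = c * B x y)
    (symm : ∀ x y, B x y = B y x)
    (pos : ∀ x, 0 ≤ B x x) :
    ConvexOn ℝ (Set.univ : Set E) (fun x => B x x) := by
  have addr : ∀ x y z, B x (y + z) = B x y + B x z := fun x y z => by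
    rw [symm, addl, symm y x, symm z x]
  have smulr : ∀ (c : ℝ) (x y : E), B x (c • y) = c * B x y := fun c x y => by
    rw [symm, smull, symm]
  refine ⟨convex_univ, fun x _ y _ a b ha hb hab => ?_⟩
  have expand : B (a • x + b • y) (a • x + b • y)
      = a * (a * B x x) + a * (b * B x y) + (b * (a * B x y) + b * (b * B y y)) := by
    rw [addl, smull, smull, addr, addr, smulr, smulr, smulr, smulr, symm y x]
    ring
  have key : 0 ≤ a * b * B (x - y) (x - y) := mul_nonneg (mul_nonneg ha hb) (pos _)
  have esub : B (x - y) (x - y) = B x x - 2 * B x y + B y y := by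
    have hxy : x - y = x + (-1 : ℝ) • y := by rw [neg_one_smul]; abel
    rw [hxy, addl, smull, addr, addr, smulr, smulr, symm y x]
    ring
  rw [esub] at key
  simp only [smul_eq_mul, expand]
  have hb' : b = 1 - a := by linarith
  subst hb'
  nlinarith [key]

lemma innerE_eq {d : ℕ} (x y : Vec d) : (inner ℝ x y : ℝ) = ∑ t, x t * y t := by
  simp [PiLp.inner_apply, RCLike.inner_apply, mul_comm]

lemma normsq_eq {d : ℕ} (x : Vec d) : ‖x‖ ^ 2 = ∑ t, x t * x t := by
  rw [← real_inner_self_eq_norm_sq]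
  exact innerE_eq x x

lemma pilp_sum_apply {d : ℕ} {α : Type*} (s : Finset α) (g : α → Vec d) (t : Fin d) :
    (∑ j ∈ s, g j) t = ∑ j ∈ s, g j t :=
  by rw [WithLp.ofLp_sum, Finset.sum_apply]

lemma quad_eq_dot {m : ℕ} (Q : Matrix (Fin m) (Fin m) ℝ) (u : Fin m → ℝ) :
    ∑ i, ∑ j, u i * Q i j * u j = Q.mulVec u ⬝ᵥ u := by
  simp only [Matrix.mulVec, dotProduct, Finset.sum_mul]
  exact Finset.sum_congr rfl fun i _ => Finset.sum_congr rfl fun j _ => by ring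

lemma rayleigh_le {m : ℕ} (Q : Matrix (Fin m) (Fin m) ℝ) (hQ : Q.IsHermitian)
    (lmax : ℝ)
    (hl : IsGreatest {μ : ℝ | ∃ w : Fin m → ℝ, w ≠ 0 ∧ Q.mulVec w = μ • w} lmax)
    (u : Fin m → ℝ) :
    Q.mulVec u ⬝ᵥ u ≤ lmax * (u ⬝ᵥ u) := by
  classical
  set b := hQ.eigenvectorBasis with hbdef
  have hev : ∀ i, hQ.eigenvalues i ≤ lmax := by
    intro i
    refine hl.2 ⟨⇑(b i), ?_, ?_⟩
    · intro h0
      exact b.orthonormal.ne_zero i (by ext t; exact congrFun h0 t)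
    · simpa [hbdef] using hQ.mulVec_eigenvectorBasis i
  have hip : ∀ x y : EuclideanSpace ℝ (Fin m), (inner ℝ x y : ℝ) = ∑ t, x t * y t := by
    intro x y; simp [PiLp.inner_apply, RCLike.inner_apply, mul_comm]
  have dsym : ∀ w z : Fin m → ℝ, Q.mulVec w ⬝ᵥ z = w ⬝ᵥ Q.mulVec z := by
    intro w z
    simp only [Matrix.mulVec, dotProduct, Finset.sum_mul, Finset.mul_sum]
    rw [Finset.sum_comm]
    refine Finset.sum_congr rfl fun i _ => Finset.sum_congr rfl fun j _ => ?_
    have hqq : Q j i = Q i j := by simpa using hQ.apply i j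
    rw [hqq]; ring
  set U : EuclideanSpace ℝ (Fin m) := WithLp.toLp 2 u with hU
  set T : EuclideanSpace ℝ (Fin m) := WithLp.toLp 2 (Q.mulVec u) with hT
  have h1 : ∑ i, (inner ℝ T (b i) : ℝ) * (inner ℝ (b i) U : ℝ) = (inner ℝ T U : ℝ) :=
    b.sum_inner_mul_inner T U
  have h2 : ∀ i, (inner ℝ T (b i) : ℝ) = hQ.eigenvalues i * (u ⬝ᵥ ⇑(b i)) := by
    intro i
    rw [hip]
    have ht : ∑ t, T t * (b i) t = Q.mulVec u ⬝ᵥ ⇑(b i) := rfl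
    rw [ht, dsym, hQ.mulVec_eigenvectorBasis]
    simp [dotProduct_smul, smul_eq_mul, hbdef]
  have h3 : ∀ i, (inner ℝ (b i) U : ℝ) = u ⬝ᵥ ⇑(b i) := by
    intro i
    rw [hip]
    simp only [dotProduct]
    exact Finset.sum_congr rfl fun t _ => mul_comm _ _
  have h4 : ∑ i, (u ⬝ᵥ ⇑(b i)) * (u ⬝ᵥ ⇑(b i)) = u ⬝ᵥ u := by
    have hps := b.sum_inner_mul_inner U U
    have hUb : ∀ i, (inner ℝ U (b i) : ℝ) = u ⬝ᵥ ⇑(b i) := by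
      intro i; rw [hip]; rfl
    simp only [hUb, h3] at hps
    rw [hps, hip]; rfl
  have hTu : Q.mulVec u ⬝ᵥ u = (inner ℝ T U : ℝ) := by rw [hip]; rfl
  rw [hTu, ← h1]
  simp only [h2, h3]
  calc ∑ i, hQ.eigenvalues i * (u ⬝ᵥ ⇑(b i)) * (u ⬝ᵥ ⇑(b i))
      ≤ ∑ i, lmax * ((u ⬝ᵥ ⇑(b i)) * (u ⬝ᵥ ⇑(b i))) := by
        refine Finset.sum_le_sum fun i _ => ?_
        rw [mul_assoc]
        exact mul_le_mul_of_nonneg_right (hev i) (mul_self_nonneg _)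
    _ = lmax * (u ⬝ᵥ u) := by rw [← Finset.mul_sum, h4]


lemma sum_inner_lap_symm {d n : ℕ} (Lap : Matrix (Fin n) (Fin n) ℝ) (hLsym : Lap.IsSymm)
    (x y : Fin n → Vec d) :
    ∑ i, (inner ℝ (x i) (∑ j : Fin n, Lap i j • y j) : ℝ)
      = ∑ i, (inner ℝ (y i) (∑ j : Fin n, Lap i j • x j) : ℝ) := by
  have hexp : ∀ (x y : Fin n → Vec d), ∑ i, (inner ℝ (x i) (∑ j : Fin n, Lap i j • y j) : ℝ)
      = ∑ i, ∑ j, Lap i j * (inner ℝ (x i) (y j) : ℝ) := by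
    intro x y
    refine Finset.sum_congr rfl fun i _ => ?_
    rw [inner_sum]
    exact Finset.sum_congr rfl fun j _ => real_inner_smul_right _ _ _
  rw [hexp, hexp, Finset.sum_comm]
  refine Finset.sum_congr rfl fun i _ => Finset.sum_congr rfl fun j _ => ?_
  rw [hLsym.apply i j, real_inner_comm]

lemma sum_inner_lap_nonneg {d n : ℕ} (Lap : Matrix (Fin n) (Fin n) ℝ)
    (hLpsd : Lap.PosSemidef) (x : Fin n → Vec d) :
    0 ≤ ∑ i, (inner ℝ (x i) (∑ j : Fin n, Lap i j • x j) : ℝ) := by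
  have h1 : ∀ i, (inner ℝ (x i) (∑ j : Fin n, Lap i j • x j) : ℝ)
      = ∑ t, x i t * ∑ j, Lap i j * x j t := by
    intro i
    rw [innerE_eq]
    refine Finset.sum_congr rfl fun t _ => ?_
    rw [pilp_sum_apply]
    simp only [PiLp.smul_apply, smul_eq_mul]
  rw [Finset.sum_congr rfl fun i _ => h1 i, Finset.sum_comm]
  refine Finset.sum_nonneg fun t _ => ?_
  have h0 := hLpsd.dotProduct_mulVec_nonneg (fun i => x i t)
  simpa [dotProduct, Matrix.mulVec, Finset.mul_sum] using h0

end Aux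

set_option maxHeartbeats 1000000

/-- for f(x, ξ) = ξᵀQξ + xᵀRξ + ℓ(x) with Q symmetric positive definite
and C = ℝ^{nd} × {λ_v : λ^i ≥ λ_max(Q) ∀i}, L̃_aug is convex-concave on
C × (ℝⁿ × ℝ^{nd} × ℝ^{mN}). -/
theorem Ltld_convex_concave_of_quadratic_f
    {d m n N : ℕ} (hn : 0 < n) (hN : 0 < N)
    (Q : Matrix (Fin m) (Fin m) ℝ) (hQsym : Q.IsSymm) (hQpd : Q.PosDef)
    (R : Matrix (Fin d) (Fin m) ℝ) (ℓ : Vec d → ℝ)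
    (hℓconv : ConvexOn ℝ Set.univ ℓ) (hℓsmooth : ContDiff ℝ 1 ℓ)
    (lmax : ℝ)
    (hlmax : IsGreatest {μ : ℝ | ∃ w : Fin m → ℝ, w ≠ 0 ∧ Q.mulVec w = μ • w} lmax)
    (f : Vec d → Vec m → ℝ)
    (hf : ∀ (x : Vec d) (ξ : Vec m),
      f x ξ = (∑ i : Fin m, ∑ j : Fin m, ξ i * Q i j * ξ j)
        + (∑ i : Fin d, ∑ j : Fin m, x i * R i j * ξ j) + ℓ x)
    (ξhat : Fin N → Vec m) (ε : ℝ) (hε : 0 < ε)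
    (v : Fin N → Fin n) (hv : Function.Surjective v)
    (Lap : Matrix (Fin n) (Fin n) ℝ) (hLsym : Lap.IsSymm) (hLpsd : Lap.PosSemidef)
    (hLker : ∀ w : Fin n → ℝ, Lap.mulVec w = 0 ↔ ∃ c : ℝ, w = fun _ => c) :
    (∀ (ν : Fin n → ℝ) (η : Fin n → Vec d) (ξs : Fin N → Vec m),
      ConvexOn ℝ {p : (Fin n → Vec d) × (Fin n → ℝ) | ∀ i, lmax ≤ p.2 i}
        (fun p => Ltld ε f ξhat v Lap p.1 p.2 ν η ξs)) ∧
    (∀ (xv : Fin n → Vec d) (lv : Fin n → ℝ), (∀ i, lmax ≤ lv i) →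
      ConcaveOn ℝ Set.univ
        (fun q : (Fin n → ℝ) × (Fin n → Vec d) × (Fin N → Vec m) =>
          Ltld ε f ξhat v Lap xv lv q.1 q.2.1 q.2.2)) := by
  classical
  have hNinv : (0:ℝ) ≤ 1 / (N:ℝ) := by positivity
  constructor
  · -- convexity in (x_v, λ_v)
    intro ν η ξs
    have hsconv : Convex ℝ {p : (Fin n → Vec d) × (Fin n → ℝ) | ∀ i, lmax ≤ p.2 i} := by
      intro p hp q hq a b ha hb hab i
      have hcoord : (a • p + b • q).2 i = a * p.2 i + b * q.2 i := rfl
      calc lmax = a * lmax + b * lmax := by rw [← add_mul, hab, one_mul]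
        _ ≤ a * p.2 i + b * q.2 i :=
            add_le_add (mul_le_mul_of_nonneg_left (hp i) ha)
              (mul_le_mul_of_nonneg_left (hq i) hb)
        _ = (a • p + b • q).2 i := hcoord.symm
    have haff : ConvexOn ℝ (Set.univ : Set ((Fin n → Vec d) × (Fin n → ℝ)))
        (fun p => ε ^ 2 / (n : ℝ) * ∑ i, p.2 i
          + (1 / (N : ℝ)) * ∑ k : Fin N, ((∑ i, ∑ j, ξs k i * Q i j * ξs k j)
              + (∑ i, ∑ j, (p.1 (v k)) i * R i j * (ξs k) j)
              - p.2 (v k) * ‖ξs k - ξhat k‖ ^ 2)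
          + ∑ i, ν i * Lap.mulVec p.2 i
          + ∑ i, (inner ℝ (η i) (∑ j : Fin n, Lap i j • p.1 j) : ℝ)) := by
      apply aff_convexOn'
      intro a b hab p q
      have hb1 : b = 1 - a := by linarith
      subst hb1
      simp only [Prod.fst_add, Prod.snd_add, Prod.smul_fst, Prod.smul_snd, Pi.add_apply,
        Pi.smul_apply, PiLp.add_apply, PiLp.smul_apply, smul_eq_mul, Matrix.mulVec,
        dotProduct, innerE_eq, pilp_sum_apply, Finset.mul_sum, mul_add, add_mul,
        Finset.sum_add_distrib, mul_sub, sub_mul, one_mul, Finset.sum_sub_distrib]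
      ring_nf
    have hG : ConvexOn ℝ (Set.univ : Set ((Fin n → Vec d) × (Fin n → ℝ)))
        (fun p => (1 / (N : ℝ)) * ∑ k : Fin N, ℓ (p.1 (v k))) := by
      refine ⟨convex_univ, fun p _ q _ a b ha hb hab => ?_⟩
      simp only [smul_eq_mul]
      have h1 : ∀ k : Fin N, ℓ ((a • p + b • q).1 (v k))
          ≤ a * ℓ (p.1 (v k)) + b * ℓ (q.1 (v k)) := by
        intro k
        have h2 := hℓconv.2 (Set.mem_univ (p.1 (v k))) (Set.mem_univ (q.1 (v k))) ha hb hab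
        simpa using h2
      calc (1 / (N : ℝ)) * ∑ k : Fin N, ℓ ((a • p + b • q).1 (v k))
          ≤ (1 / (N : ℝ)) * ∑ k : Fin N, (a * ℓ (p.1 (v k)) + b * ℓ (q.1 (v k))) :=
            mul_le_mul_of_nonneg_left (Finset.sum_le_sum fun k _ => h1 k) hNinv
        _ = a * ((1 / (N : ℝ)) * ∑ k : Fin N, ℓ (p.1 (v k)))
            + b * ((1 / (N : ℝ)) * ∑ k : Fin N, ℓ (q.1 (v k))) := by
            rw [Finset.sum_add_distrib, ← Finset.mul_sum, ← Finset.mul_sum]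
            ring
    have hQX : ConvexOn ℝ (Set.univ : Set ((Fin n → Vec d) × (Fin n → ℝ)))
        (fun p => (1 / 2 : ℝ) * ∑ i, (inner ℝ (p.1 i) (∑ j : Fin n, Lap i j • p.1 j) : ℝ)) := by
      exact quad_convexOn'
        (fun p q : (Fin n → Vec d) × (Fin n → ℝ) =>
          (1 / 2 : ℝ) * ∑ i, (inner ℝ (p.1 i) (∑ j : Fin n, Lap i j • q.1 j) : ℝ))
        (by
          intro p q r
          simp only [Prod.fst_add, Pi.add_apply, inner_add_left, Finset.sum_add_distrib,
            mul_add])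
        (by
          intro c p q
          simp only [Prod.smul_fst, Pi.smul_apply, real_inner_smul_left, ← Finset.mul_sum]
          ring)
        (by
          intro p q
          rw [sum_inner_lap_symm Lap hLsym p.1 q.1])
        (by
          intro p
          exact mul_nonneg (by norm_num) (sum_inner_lap_nonneg Lap hLpsd p.1))
    have hQL : ConvexOn ℝ (Set.univ : Set ((Fin n → Vec d) × (Fin n → ℝ)))
        (fun p => (1 / 2 : ℝ) * ∑ i, p.2 i * Lap.mulVec p.2 i) := by
      exact quad_convexOn'
        (fun p q : (Fin n → Vec d) × (Fin n → ℝ) =>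
          (1 / 2 : ℝ) * ∑ i, p.2 i * Lap.mulVec q.2 i)
        (by
          intro p q r
          simp only [Prod.snd_add, Pi.add_apply, add_mul, Finset.sum_add_distrib, mul_add])
        (by
          intro c p q
          simp only [Prod.smul_snd, Pi.smul_apply, smul_eq_mul, mul_assoc, ← Finset.mul_sum]
          ring)
        (by
          intro p q
          have h : ∑ i, p.2 i * Lap.mulVec q.2 i = ∑ i, q.2 i * Lap.mulVec p.2 i := by
            simp only [Matrix.mulVec, dotProduct, Finset.mul_sum]
            rw [Finset.sum_comm]
            refine Finset.sum_congr rfl fun i _ => Finset.sum_congr rfl fun j _ => ?_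
            rw [hLsym.apply i j]
            ring
          rw [h])
        (by
          intro p
          have h0 := hLpsd.dotProduct_mulVec_nonneg p.2
          have h1 : (0:ℝ) ≤ ∑ i, p.2 i * Lap.mulVec p.2 i := h0
          linarith)
    have hdecomp : (fun p : (Fin n → Vec d) × (Fin n → ℝ) =>
          Ltld ε f ξhat v Lap p.1 p.2 ν η ξs)
        = fun p => (ε ^ 2 / (n : ℝ) * ∑ i, p.2 i
            + (1 / (N : ℝ)) * ∑ k : Fin N, ((∑ i, ∑ j, ξs k i * Q i j * ξs k j)
                + (∑ i, ∑ j, (p.1 (v k)) i * R i j * (ξs k) j)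
                - p.2 (v k) * ‖ξs k - ξhat k‖ ^ 2)
            + ∑ i, ν i * Lap.mulVec p.2 i
            + ∑ i, (inner ℝ (η i) (∑ j : Fin n, Lap i j • p.1 j) : ℝ))
          + ((1 / (N : ℝ)) * ∑ k : Fin N, ℓ (p.1 (v k))
            + ((1 / 2 : ℝ) * ∑ i, (inner ℝ (p.1 i) (∑ j : Fin n, Lap i j • p.1 j) : ℝ)
              + (1 / 2 : ℝ) * ∑ i, p.2 i * Lap.mulVec p.2 i)) := by
      funext p
      simp only [Ltld, gk, hf]
      rw [show (∑ k : Fin N, ((∑ i, ∑ j, ξs k i * Q i j * ξs k j)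
            + (∑ i, ∑ j, (p.1 (v k)) i * R i j * (ξs k) j) + ℓ (p.1 (v k))
            - p.2 (v k) * ‖ξs k - ξhat k‖ ^ 2))
          = (∑ k : Fin N, ((∑ i, ∑ j, ξs k i * Q i j * ξs k j)
            + (∑ i, ∑ j, (p.1 (v k)) i * R i j * (ξs k) j)
            - p.2 (v k) * ‖ξs k - ξhat k‖ ^ 2)) + ∑ k : Fin N, ℓ (p.1 (v k)) from by
          rw [← Finset.sum_add_distrib]
          exact Finset.sum_congr rfl fun k _ => by ring]
      ring
    rw [hdecomp]
    exact (haff.add (hG.add (hQX.add hQL))).subset (Set.subset_univ _) hsconv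
  · -- concavity in (ν, η, ξs)
    intro xv lv hlv
    have hnorm : ∀ (k : Fin N) (ξ : Vec m), ‖ξ - ξhat k‖ ^ 2
        = (∑ t, ξ t * ξ t) - 2 * (∑ t, ξhat k t * ξ t) + ∑ t, ξhat k t * ξhat k t := by
      intro k ξ
      rw [normsq_eq]
      have h1 : ∀ t, (ξ - ξhat k) t * (ξ - ξhat k) t
          = ξ t * ξ t - 2 * (ξhat k t * ξ t) + ξhat k t * ξhat k t := by
        intro t; simp only [PiLp.sub_apply]; ring
      rw [Finset.sum_congr rfl fun t _ => h1 t]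
      simp only [Finset.sum_add_distrib, Finset.sum_sub_distrib, Finset.mul_sum]
    have hA2 : ConcaveOn ℝ (Set.univ : Set ((Fin n → ℝ) × (Fin n → Vec d) × (Fin N → Vec m)))
        (fun q => ε ^ 2 / (n : ℝ) * ∑ i, lv i
          + (1 / (N : ℝ)) * ∑ k : Fin N, ((∑ i, ∑ j, (xv (v k)) i * R i j * (q.2.2 k) j)
              + ℓ (xv (v k)) + lv (v k) * (2 * ∑ t, ξhat k t * q.2.2 k t)
              - lv (v k) * ∑ t, ξhat k t * ξhat k t)
          + ∑ i, q.1 i * Lap.mulVec lv i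
          + ∑ i, (inner ℝ (q.2.1 i) (∑ j : Fin n, Lap i j • xv j) : ℝ)
          + (1 / 2 : ℝ) * ∑ i, (inner ℝ (xv i) (∑ j : Fin n, Lap i j • xv j) : ℝ)
          + (1 / 2 : ℝ) * ∑ i, lv i * Lap.mulVec lv i) := by
      apply aff_concaveOn'
      intro a b hab p q
      have hb1 : b = 1 - a := by linarith
      subst hb1
      simp only [Prod.fst_add, Prod.snd_add, Prod.smul_fst, Prod.smul_snd, Pi.add_apply,
        Pi.smul_apply, PiLp.add_apply, PiLp.smul_apply, smul_eq_mul, innerE_eq,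
        pilp_sum_apply, Finset.mul_sum, mul_add, add_mul, Finset.sum_add_distrib, mul_sub,
        sub_mul, one_mul, Finset.sum_sub_distrib]
      ring_nf
      simp only [mul_comm, mul_left_comm, mul_assoc]
      abel
    have hB2 : ConvexOn ℝ (Set.univ : Set ((Fin n → ℝ) × (Fin n → Vec d) × (Fin N → Vec m)))
        (fun q => (1 / (N : ℝ)) * ∑ k : Fin N, (lv (v k) * ∑ t, q.2.2 k t * q.2.2 k t
          - ∑ i, ∑ j, q.2.2 k i * Q i j * q.2.2 k j)) := by
      exact quad_convexOn'
        (fun q r : (Fin n → ℝ) × (Fin n → Vec d) × (Fin N → Vec m) =>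
          (1 / (N : ℝ)) * ∑ k : Fin N, (lv (v k) * ∑ t, q.2.2 k t * r.2.2 k t
            - ∑ i, ∑ j, q.2.2 k i * Q i j * r.2.2 k j))
        (by
          intro q r s
          dsimp only
          rw [← mul_add, ← Finset.sum_add_distrib]
          refine congrArg _ (Finset.sum_congr rfl fun k _ => ?_)
          simp only [Prod.snd_add, Pi.add_apply, PiLp.add_apply, add_mul, mul_add,
            Finset.sum_add_distrib]
          ring)
        (by
          intro c q r
          dsimp only
          rw [show c * ((1 / (N : ℝ)) * ∑ k : Fin N, (lv (v k) * ∑ t, q.2.2 k t * r.2.2 k t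
              - ∑ i, ∑ j, q.2.2 k i * Q i j * r.2.2 k j))
            = (1 / (N : ℝ)) * ∑ k : Fin N, (c * (lv (v k) * ∑ t, q.2.2 k t * r.2.2 k t
              - ∑ i, ∑ j, q.2.2 k i * Q i j * r.2.2 k j)) from by
            simp only [Finset.mul_sum]
            exact Finset.sum_congr rfl fun k _ => by ring]
          refine congrArg _ (Finset.sum_congr rfl fun k _ => ?_)
          simp only [Prod.smul_snd, Pi.smul_apply, PiLp.smul_apply, smul_eq_mul, mul_assoc,
            ← Finset.mul_sum]
          ring)
        (by
          intro q r
          dsimp only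
          refine congrArg _ (Finset.sum_congr rfl fun k _ => ?_)
          have h1 : (∑ t, q.2.2 k t * r.2.2 k t) = ∑ t, r.2.2 k t * q.2.2 k t :=
            Finset.sum_congr rfl fun t _ => mul_comm _ _
          have h2 : (∑ i, ∑ j, q.2.2 k i * Q i j * r.2.2 k j)
              = ∑ i, ∑ j, r.2.2 k i * Q i j * q.2.2 k j := by
            rw [Finset.sum_comm]
            refine Finset.sum_congr rfl fun i _ => Finset.sum_congr rfl fun j _ => ?_
            rw [hQsym.apply i j]
            ring
          rw [h1, h2])
        (by
          intro q
          refine mul_nonneg hNinv (Finset.sum_nonneg fun k _ => ?_)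
          have e1 : ∑ i, ∑ j, q.2.2 k i * Q i j * q.2.2 k j
              = dotProduct (Q.mulVec (fun t => q.2.2 k t)) (fun t => q.2.2 k t) :=
            quad_eq_dot Q (fun t => q.2.2 k t)
          have e2 := rayleigh_le Q hQpd.1 lmax hlmax (fun t => q.2.2 k t)
          have e3 : dotProduct (fun t => q.2.2 k t) (fun t => q.2.2 k t)
              = ∑ t, q.2.2 k t * q.2.2 k t := rfl
          have e4 : 0 ≤ dotProduct (fun t => q.2.2 k t) (fun t => q.2.2 k t) := by
            rw [e3]
            exact Finset.sum_nonneg fun t _ => mul_self_nonneg _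
          have e5 : lmax * dotProduct (fun t => q.2.2 k t) (fun t => q.2.2 k t)
              ≤ lv (v k) * dotProduct (fun t => q.2.2 k t) (fun t => q.2.2 k t) :=
            mul_le_mul_of_nonneg_right (hlv (v k)) e4
          rw [sub_nonneg, e1, ← e3]
          exact le_trans e2 e5)
    have hdecomp2 : (fun q : (Fin n → ℝ) × (Fin n → Vec d) × (Fin N → Vec m) =>
          Ltld ε f ξhat v Lap xv lv q.1 q.2.1 q.2.2)
        = fun q => (ε ^ 2 / (n : ℝ) * ∑ i, lv i
            + (1 / (N : ℝ)) * ∑ k : Fin N, ((∑ i, ∑ j, (xv (v k)) i * R i j * (q.2.2 k) j)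
                + ℓ (xv (v k)) + lv (v k) * (2 * ∑ t, ξhat k t * q.2.2 k t)
                - lv (v k) * ∑ t, ξhat k t * ξhat k t)
            + ∑ i, q.1 i * Lap.mulVec lv i
            + ∑ i, (inner ℝ (q.2.1 i) (∑ j : Fin n, Lap i j • xv j) : ℝ)
            + (1 / 2 : ℝ) * ∑ i, (inner ℝ (xv i) (∑ j : Fin n, Lap i j • xv j) : ℝ)
            + (1 / 2 : ℝ) * ∑ i, lv i * Lap.mulVec lv i)
          + -((1 / (N : ℝ)) * ∑ k : Fin N, (lv (v k) * ∑ t, q.2.2 k t * q.2.2 k t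
              - ∑ i, ∑ j, q.2.2 k i * Q i j * q.2.2 k j)) := by
      funext q
      simp only [Ltld, gk, hf, hnorm]
      rw [show (∑ k : Fin N, ((∑ i, ∑ j, q.2.2 k i * Q i j * q.2.2 k j)
            + (∑ i, ∑ j, (xv (v k)) i * R i j * (q.2.2 k) j) + ℓ (xv (v k))
            - lv (v k) * ((∑ t, q.2.2 k t * q.2.2 k t) - 2 * (∑ t, ξhat k t * q.2.2 k t)
              + ∑ t, ξhat k t * ξhat k t)))
          = (∑ k : Fin N, ((∑ i, ∑ j, (xv (v k)) i * R i j * (q.2.2 k) j)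
              + ℓ (xv (v k)) + lv (v k) * (2 * ∑ t, ξhat k t * q.2.2 k t)
              - lv (v k) * ∑ t, ξhat k t * ξhat k t))
            - ∑ k : Fin N, (lv (v k) * ∑ t, q.2.2 k t * q.2.2 k t
              - ∑ i, ∑ j, q.2.2 k i * Q i j * q.2.2 k j) from by
          rw [← Finset.sum_sub_distrib]
          exact Finset.sum_congr rfl fun k _ => by ring]
      ring
    rw [hdecomp2]
    exact hA2.add hB2.neg

end
end
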